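/- arXiv:1512.05876 — 4 statements merged into one kernel-verified Lean document; each statement's English description precedes it below -/
import Mathlib

section
/- Let G be a connected bipartite graph with bipartition (X, Y), no sibling pairs, |X| ≥ 2, |Y| ≥ 2, and n = |X| + |Y| vertices, and let k be a natural number. Then the number of layouts f_X on X for which there exists a layout f_Y on Y such that the two-layer drawing (f_X, f_Y) has at most k crossings is at most n · 2^{4k + 3n - 4}. -/
open Finset

variable {X Y : Type} [Fintype X] [Fintype Y] [DecidableEq X] [DecidableEq Y]

/-- The adjacency relation on `X ⊕ Y` induced by an edge set `E ⊆ X × Y`. -/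
def biAdj (E : Finset (X × Y)) : X ⊕ Y → X ⊕ Y → Prop
  | Sum.inl x, Sum.inr y => (x, y) ∈ E
  | Sum.inr y, Sum.inl x => (x, y) ∈ E
  | _, _ => False

/-- The bipartite graph with parts `X`, `Y` and edge set `E`, as a simple graph on `X ⊕ Y`. -/
def biGraph (E : Finset (X × Y)) : SimpleGraph (X ⊕ Y) where
  Adj := biAdj E
  symm := ⟨by rintro (x | y) (x' | y') h <;> simp_all [biAdj]⟩
  loopless := ⟨by rintro (x | y) h <;> simp_all [biAdj]⟩

instance (E : Finset (X × Y)) : DecidableRel (biGraph E).Adj := fun u v =>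
  match u, v with
  | Sum.inl x, Sum.inr y => (inferInstance : Decidable ((x, y) ∈ E))
  | Sum.inr y, Sum.inl x => (inferInstance : Decidable ((x, y) ∈ E))
  | Sum.inl _, Sum.inl _ => .isFalse (by simp [biGraph, biAdj])
  | Sum.inr _, Sum.inr _ => .isFalse (by simp [biGraph, biAdj])

/-- The crossing number of the two-layer drawing `(fX, fY)` of the bipartite graph
with edge set `E`: the number of pairs of edges `(x, y)`, `(x', y')` with
`fX x < fX x'` and `fY y' < fY y`. -/
def crossNum (E : Finset (X × Y)) (fX : X ≃ Fin (Fintype.card X))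
    (fY : Y ≃ Fin (Fintype.card Y)) : ℕ :=
  ((E ×ˢ E).filter fun p => fX p.1.1 < fX p.2.1 ∧ fY p.2.2 < fY p.1.2).card

/-- A leaf is a vertex of degree one. -/
def IsLeaf (E : Finset (X × Y)) (v : X ⊕ Y) : Prop := (biGraph E).degree v = 1

/-- `G` has no sibling pairs: no two distinct leaves have a common neighbor. -/
def NoSiblingPairs (E : Finset (X × Y)) : Prop :=
  ∀ u v : X ⊕ Y, u ≠ v → IsLeaf E u → IsLeaf E v →
    ∀ w, ¬ ((biGraph E).Adj u w ∧ (biGraph E).Adj v w)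

/-- The bipartite crossing number: the minimum crossing number over all two-layer drawings. -/
noncomputable def bcr (E : Finset (X × Y)) : ℕ :=
  sInf {k | ∃ fX fY, crossNum E fX fY = k}

set_option linter.unusedSectionVars false
set_option linter.unusedVariables false

namespace TLCM
noncomputable local instance VLin : LinearOrder (X ⊕ Y) :=
  LinearOrder.lift' (fun v => Fintype.equivFin (X ⊕ Y) v) (Fintype.equivFin (X ⊕ Y)).injective
variable (E : Finset (X × Y)) (fX : X ≃ Fin (Fintype.card X))
  (fY : Y ≃ Fin (Fintype.card Y)) (root : X)
/-- position of a vertex on its own layer -/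
def posV : X ⊕ Y → ℕ := Sum.elim (fun x => (fX x : ℕ)) (fun y => (fY y : ℕ))

lemma adj_sides {a b : X ⊕ Y} (h : (biGraph E).Adj a b) : a.isLeft = !b.isLeft := by
  cases a <;> cases b <;> simp_all [biGraph, biAdj]

lemma posV_inj {a b : X ⊕ Y} (hs : a.isLeft = b.isLeft)
    (h : posV fX fY a = posV fX fY b) : a = b := by
  cases a <;> cases b <;> simp_all [posV]
  · exact fX.injective (Fin.val_injective h)
  · exact fY.injective (Fin.val_injective h)

def frontier (S : Finset (X ⊕ Y)) : Finset (X ⊕ Y) :=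
  Finset.univ.filter (fun v => v ∉ S ∧ ∃ u ∈ S, (biGraph E).Adj u v)
noncomputable def pick (S : Finset (X ⊕ Y)) : X ⊕ Y :=
  if h : (frontier E S).Nonempty then (frontier E S).min' h else Sum.inl root
noncomputable def seq : ℕ → X ⊕ Y
  | 0 => Sum.inl root
  | (i+1) => pick E root ((Finset.univ : Finset (Fin (i+1))).image (fun j => seq j.val))
  termination_by i => i
  decreasing_by exact j.isLt
noncomputable def pl (i : ℕ) : Finset (X ⊕ Y) :=
  (Finset.univ : Finset (Fin i)).image (fun j => seq E root j.val)
lemma mem_pl {v : X ⊕ Y} {i : ℕ} : v ∈ pl E root i ↔ ∃ j < i, seq E root j = v := by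
  simp only [pl, Finset.mem_image, Finset.mem_univ, true_and]
  exact ⟨fun ⟨j, h⟩ => ⟨j.val, j.isLt, h⟩, fun ⟨j, hj, h⟩ => ⟨⟨j, hj⟩, h⟩⟩
lemma pl_zero : pl E root 0 = ∅ := by simp [pl]
lemma pl_succ (i : ℕ) : pl E root (i+1) = insert (seq E root i) (pl E root i) := by
  ext v
  simp only [mem_pl, Finset.mem_insert]
  constructor
  · rintro ⟨j, hj, h⟩
    rcases Nat.lt_succ_iff_lt_or_eq.mp hj with hj' | rfl
    · exact Or.inr ⟨j, hj', h⟩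
    · exact Or.inl h.symm
  · rintro (h | ⟨j, hj, h⟩)
    · exact ⟨i, Nat.lt_succ_self i, h.symm⟩
    · exact ⟨j, Nat.lt_succ_of_lt hj, h⟩
lemma pl_mono {i j : ℕ} (h : i ≤ j) : pl E root i ⊆ pl E root j := by
  intro v hv; rw [mem_pl] at *
  obtain ⟨a, ha, h'⟩ := hv; exact ⟨a, lt_of_lt_of_le ha h, h'⟩
lemma seq_succ (i : ℕ) : seq E root (i+1) = pick E root (pl E root (i+1)) := by
  rw [seq]; rfl
lemma seq_zero : seq E root 0 = Sum.inl root := by rw [seq]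
lemma exists_boundary (hconn : (biGraph E).Connected) (S : Finset (X ⊕ Y))
    (hS : S.Nonempty) (hne : S ≠ Finset.univ) :
    ∃ v, v ∉ S ∧ ∃ u ∈ S, (biGraph E).Adj u v := by
  obtain ⟨u, hu⟩ := hS
  have : ∃ w, w ∉ S := by
    by_contra h; push_neg at h; exact hne (Finset.eq_univ_iff_forall.mpr h)
  obtain ⟨w, hw⟩ := this
  obtain ⟨p⟩ := hconn.preconnected u w
  clear hne
  induction p with
  | nil => exact absurd hu hw
  | @cons a b c hab p ih =>
    by_cases hb : b ∈ S
    · exact ih hb hw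
    · exact ⟨b, hb, a, hu, hab⟩

section Enum
variable (hconn : (biGraph E).Connected)

/-- total number of vertices -/
abbrev N : ℕ := Fintype.card X + Fintype.card Y

lemma card_V : Fintype.card (X ⊕ Y) = N (X := X) (Y := Y) := Fintype.card_sum

include hconn in
lemma enum_step {i : ℕ} (h1 : 1 ≤ i) (hi : i < N (X := X) (Y := Y))
    (hcard : (pl E root i).card = i) :
    seq E root i ∈ frontier E (pl E root i) := by
  have hne : (pl E root i).Nonempty := by
    refine ⟨Sum.inl root, ?_⟩
    rw [mem_pl]; exact ⟨0, h1, seq_zero E root⟩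
  have hnu : pl E root i ≠ Finset.univ := by
    intro h
    rw [h, Finset.card_univ, card_V] at hcard
    omega
  obtain ⟨v, hv, u, hu, hadj⟩ := exists_boundary E hconn _ hne hnu
  have hfront : (frontier E (pl E root i)).Nonempty := by
    refine ⟨v, ?_⟩
    simp only [frontier, Finset.mem_filter, Finset.mem_univ, true_and]
    exact ⟨hv, u, hu, hadj⟩
  obtain ⟨j, rfl⟩ : ∃ j, i = j + 1 := ⟨i - 1, by omega⟩
  rw [seq_succ, pick, dif_pos hfront]
  exact (frontier E (pl E root (j+1))).min'_mem hfront

include hconn in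
lemma pl_card : ∀ i, i ≤ N (X := X) (Y := Y) → (pl E root i).card = i := by
  intro i
  induction i with
  | zero => intro _; simp [pl_zero]
  | succ j ih =>
    intro hj
    have hc := ih (by omega)
    rw [pl_succ]
    by_cases hj0 : j = 0
    · subst hj0; simp [pl_zero]
    · have hmem := enum_step E root hconn (by omega) (by omega) hc
      have : seq E root j ∉ pl E root j := by
        simp only [frontier, Finset.mem_filter] at hmem
        exact hmem.2.1
      rw [Finset.card_insert_of_notMem this, hc]

include hconn in
lemma seq_notin {i : ℕ} (hi : i < N (X := X) (Y := Y)) : seq E root i ∉ pl E root i := by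
  by_cases h0 : i = 0
  · subst h0; simp [pl_zero]
  · have := enum_step E root hconn (by omega) hi (pl_card E root hconn i (by omega))
    simp only [frontier, Finset.mem_filter] at this
    exact this.2.1

include hconn in
lemma seq_adj_earlier {i : ℕ} (h1 : 1 ≤ i) (hi : i < N (X := X) (Y := Y)) :
    ∃ u ∈ pl E root i, (biGraph E).Adj u (seq E root i) := by
  have := enum_step E root hconn h1 hi (pl_card E root hconn i (by omega))
  simp only [frontier, Finset.mem_filter] at this
  exact this.2.2

include hconn in
lemma pl_univ : pl E root (N (X := X) (Y := Y)) = Finset.univ := by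
  apply Finset.eq_univ_of_card
  rw [pl_card E root hconn _ le_rfl, card_V]

include hconn in
lemma seq_inj {i j : ℕ} (hi : i < N (X := X) (Y := Y)) (hj : j < N (X := X) (Y := Y))
    (h : seq E root i = seq E root j) : i = j := by
  by_contra hne
  rcases Nat.lt_or_ge i j with hlt | hge
  · exact seq_notin E root hconn hj ((mem_pl E root).mpr ⟨i, hlt, h⟩)
  · have hlt : j < i := by omega
    exact seq_notin E root hconn hi ((mem_pl E root).mpr ⟨j, hlt, h.symm⟩)

/-- index of a vertex in the enumeration -/
noncomputable def stepIdx (v : X ⊕ Y) : ℕ := sInf {i | seq E root i = v}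

include hconn in
lemma seq_surj (v : X ⊕ Y) : ∃ i < N (X := X) (Y := Y), seq E root i = v := by
  have : v ∈ pl E root (N (X := X) (Y := Y)) := by rw [pl_univ E root hconn]; exact Finset.mem_univ v
  exact (mem_pl E root).mp this

include hconn in
lemma stepIdx_spec (v : X ⊕ Y) :
    seq E root (stepIdx E root v) = v ∧ stepIdx E root v < N (X := X) (Y := Y) := by
  obtain ⟨i, hi, h⟩ := seq_surj E root hconn v
  have hne : {j | seq E root j = v}.Nonempty := ⟨i, h⟩
  have hmem := Nat.sInf_mem hne
  have hle : stepIdx E root v ≤ i := Nat.sInf_le h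
  exact ⟨hmem, lt_of_le_of_lt hle hi⟩

include hconn in
lemma stepIdx_seq {i : ℕ} (hi : i < N (X := X) (Y := Y)) : stepIdx E root (seq E root i) = i := by
  obtain ⟨h1, h2⟩ := stepIdx_spec E root hconn (seq E root i)
  exact seq_inj E root hconn h2 hi h1

include hconn in
lemma stepIdx_root (hN : 0 < N (X := X) (Y := Y)) : stepIdx E root (Sum.inl root) = 0 := by
  have h0 : seq E root 0 = Sum.inl root := seq_zero E root
  rw [← h0]
  exact stepIdx_seq E root hconn hN

end Enum

section Struct
variable (hconn : (biGraph E).Connected)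

/-- the parent of a vertex: its least already-placed neighbour -/
noncomputable def parentV (v : X ⊕ Y) : X ⊕ Y :=
  let C := (pl E root (stepIdx E root v)).filter (fun u => (biGraph E).Adj v u)
  if h : C.Nonempty then C.min' h else Sum.inl root

include hconn in
lemma parentV_spec {v : X ⊕ Y} (hv : v ≠ Sum.inl root) :
    (biGraph E).Adj v (parentV E root v) ∧
      parentV E root v ∈ pl E root (stepIdx E root v) := by
  obtain ⟨hseq, hlt⟩ := stepIdx_spec E root hconn v
  have h1 : 1 ≤ stepIdx E root v := by
    rcases Nat.eq_zero_or_pos (stepIdx E root v) with h0 | h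
    · exfalso; apply hv; rw [← hseq, h0, seq_zero]
    · exact h
  obtain ⟨u, hu, hadj⟩ := seq_adj_earlier E root hconn h1 hlt
  rw [hseq] at hadj
  have hne : ((pl E root (stepIdx E root v)).filter
      (fun u => (biGraph E).Adj v u)).Nonempty :=
    ⟨u, Finset.mem_filter.mpr ⟨hu, hadj.symm⟩⟩
  rw [parentV, dif_pos hne]
  have := Finset.min'_mem _ hne
  rw [Finset.mem_filter] at this
  exact ⟨this.2, this.1⟩

include hconn in
lemma parentV_adj {v : X ⊕ Y} (hv : v ≠ Sum.inl root) :
    (biGraph E).Adj v (parentV E root v) := (parentV_spec E root hconn hv).1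

include hconn in
lemma parentV_mem {v : X ⊕ Y} (hv : v ≠ Sum.inl root) :
    parentV E root v ∈ pl E root (stepIdx E root v) := (parentV_spec E root hconn hv).2

/-- neighbours other than the parent -/
noncomputable def extras (v : X ⊕ Y) : Finset (X ⊕ Y) :=
  ((biGraph E).neighborFinset v).erase (parentV E root v)

/-- the type flag of a vertex: 1 = leaf, 0 = all extras left of parent,
2 = all extras right, 3 = mixed -/
noncomputable def typeOf (v : X ⊕ Y) : Fin 4 :=
  if extras E root v = ∅ then 1
  else if ∀ u ∈ extras E root v, posV fX fY u < posV fX fY (parentV E root v) then 0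
  else if ∀ u ∈ extras E root v, posV fX fY (parentV E root v) < posV fX fY u then 2
  else 3

lemma extras_adj {v u : X ⊕ Y} (h : u ∈ extras E root v) : (biGraph E).Adj v u := by
  rw [extras, Finset.mem_erase, SimpleGraph.mem_neighborFinset] at h
  exact h.2

lemma extras_ne_parent {v u : X ⊕ Y} (h : u ∈ extras E root v) : u ≠ parentV E root v := by
  rw [extras, Finset.mem_erase] at h; exact h.1

lemma typeOf_eq_one {v : X ⊕ Y} (h : typeOf E fX fY root v = 1) : extras E root v = ∅ := by
  rw [typeOf] at h
  split_ifs at h with h1 h2 h3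
  · exact h1
  all_goals exact absurd h (by decide)

lemma typeOf_zero_below {v : X ⊕ Y} (h : typeOf E fX fY root v = 0) :
    (extras E root v).Nonempty ∧
      ∀ u ∈ extras E root v, posV fX fY u < posV fX fY (parentV E root v) := by
  rw [typeOf] at h
  split_ifs at h with h1 h2 h3
  · exact absurd h (by decide)
  · exact ⟨Finset.nonempty_iff_ne_empty.mpr h1, h2⟩
  · exact absurd h (by decide)
  · exact absurd h (by decide)

lemma extras_side (hconn : (biGraph E).Connected) {v : X ⊕ Y} (hv : v ≠ Sum.inl root)
    {u : X ⊕ Y} (hu : u ∈ extras E root v) : u.isLeft = (parentV E root v).isLeft := by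
  have h1 := adj_sides E (extras_adj E root hu)
  have h2 := adj_sides E (parentV_adj E root hconn hv)
  cases hul : u.isLeft <;> cases hvl : v.isLeft <;>
    cases hpl : (parentV E root v).isLeft <;> simp_all

include hconn in
lemma typeOf_above {v : X ⊕ Y} (hv : v ≠ Sum.inl root)
    (h : typeOf E fX fY root v = 2 ∨ typeOf E fX fY root v = 3) :
    ∃ u ∈ extras E root v, posV fX fY (parentV E root v) < posV fX fY u := by
  have habove : ∀ u ∈ extras E root v,
      ¬ posV fX fY u < posV fX fY (parentV E root v) →
      posV fX fY (parentV E root v) < posV fX fY u := by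
    intro u hu hnb
    have hne : posV fX fY u ≠ posV fX fY (parentV E root v) := fun he =>
      extras_ne_parent E root hu (posV_inj fX fY (extras_side E root hconn hv hu) he)
    omega
  rw [typeOf] at h
  split_ifs at h with h1 h2 h3
  · rcases h with h | h <;> exact absurd h (by decide)
  · rcases h with h | h <;> exact absurd h (by decide)
  · obtain ⟨u, hu⟩ := Finset.nonempty_iff_ne_empty.mpr h1
    exact ⟨u, hu, h3 u hu⟩
  · push_neg at h2
    obtain ⟨u, hu, hnb⟩ := h2
    exact ⟨u, hu, habove u hu (not_lt.mpr hnb)⟩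

end Struct

open scoped Classical in
/-- canonical precedence between same-side vertices -/
noncomputable def precV (a b : X ⊕ Y) : Prop :=
  a = Sum.inl root ∨ (b ≠ Sum.inl root ∧ a ≠ Sum.inl root ∧
    (posV fX fY (parentV E root a) < posV fX fY (parentV E root b) ∨
      (posV fX fY (parentV E root a) = posV fX fY (parentV E root b) ∧
        ((typeOf E fX fY root a : ℕ) < (typeOf E fX fY root b : ℕ) ∨
          (typeOf E fX fY root a = typeOf E fX fY root b ∧ a < b)))))

lemma precV_total {a b : X ⊕ Y} (hne : a ≠ b) :
    precV E fX fY root a b ∨ precV E fX fY root b a := by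
  rw [precV, precV]
  by_cases ha : a = Sum.inl root
  · exact Or.inl (Or.inl ha)
  by_cases hb : b = Sum.inl root
  · exact Or.inr (Or.inl hb)
  rcases lt_trichotomy (posV fX fY (parentV E root a)) (posV fX fY (parentV E root b))
    with h | h | h
  · exact Or.inl (Or.inr ⟨hb, ha, Or.inl h⟩)
  · rcases lt_trichotomy ((typeOf E fX fY root a : ℕ)) ((typeOf E fX fY root b : ℕ))
      with h2 | h2 | h2
    · exact Or.inl (Or.inr ⟨hb, ha, Or.inr ⟨h, Or.inl h2⟩⟩)
    · have heq : typeOf E fX fY root a = typeOf E fX fY root b := Fin.ext h2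
      rcases lt_or_gt_of_ne hne with h3 | h3
      · exact Or.inl (Or.inr ⟨hb, ha, Or.inr ⟨h, Or.inr ⟨heq, h3⟩⟩⟩)
      · exact Or.inr (Or.inr ⟨ha, hb, Or.inr ⟨h.symm, Or.inr ⟨heq.symm, h3⟩⟩⟩)
    · exact Or.inr (Or.inr ⟨ha, hb, Or.inr ⟨h.symm, Or.inl h2⟩⟩)
  · exact Or.inr (Or.inr ⟨ha, hb, Or.inl h⟩)

lemma precV_root_lt {a : X ⊕ Y} (h : precV E fX fY root a (Sum.inl root)) :
    a = Sum.inl root := by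
  rcases h with h | ⟨hb, _, _⟩
  · exact h
  · exact absurd rfl hb

section Ranks
open scoped Classical

/-- placed same-side vertices before step `i` -/
noncomputable def plss (i : ℕ) : Finset (X ⊕ Y) :=
  (pl E root i).filter (fun w => w.isLeft = (seq E root i).isLeft)

noncomputable def TrueRk (i : ℕ) : ℕ :=
  ((plss E root i).filter (fun w => posV fX fY w < posV fX fY (seq E root i))).card

noncomputable def CanonRk (i : ℕ) : ℕ :=
  ((plss E root i).filter (fun w => precV E fX fY root w (seq E root i))).card

noncomputable def dInt (i : ℕ) : ℤ := (TrueRk E fX fY root i : ℤ) - CanonRk E fX fY root i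

noncomputable def DisFiber (i : ℕ) : Finset (X ⊕ Y) :=
  (plss E root i).filter (fun w =>
    (precV E fX fY root w (seq E root i) ∧
        posV fX fY (seq E root i) < posV fX fY w) ∨
      (precV E fX fY root (seq E root i) w ∧
        posV fX fY w < posV fX fY (seq E root i)))

variable (hconn : (biGraph E).Connected)

include hconn in
lemma natAbs_dInt_le {i : ℕ} (hi : i < N (X := X) (Y := Y)) :
    (dInt E fX fY root i).natAbs ≤ (DisFiber E fX fY root i).card := by
  set v := seq E root i with hv
  have hvnotin : v ∉ pl E root i := seq_notin E root hconn hi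
  have hwprops : ∀ w ∈ plss E root i, w ≠ v ∧ w.isLeft = v.isLeft := by
    intro w hw
    rw [plss, Finset.mem_filter] at hw
    exact ⟨fun he => hvnotin (he ▸ hw.1), hw.2⟩
  set A := (plss E root i).filter (fun w => posV fX fY w < posV fX fY v) with hA
  set B := (plss E root i).filter (fun w => precV E fX fY root w v) with hB
  have hABsub : A \ B ⊆ DisFiber E fX fY root i := by
    intro w hw
    rw [Finset.mem_sdiff, hA, hB, Finset.mem_filter, Finset.mem_filter] at hw
    obtain ⟨⟨hw1, hw2⟩, hw3⟩ := hw
    have hnp : ¬ precV E fX fY root w v := fun h => hw3 ⟨hw1, h⟩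
    have hp : precV E fX fY root v w :=
      (precV_total E fX fY root (a := w) (b := v)
        (fun he => (hwprops w hw1).1 he)).resolve_left hnp
    rw [DisFiber, Finset.mem_filter]
    exact ⟨hw1, Or.inr ⟨hp, hw2⟩⟩
  have hBAsub : B \ A ⊆ DisFiber E fX fY root i := by
    intro w hw
    rw [Finset.mem_sdiff, hA, hB, Finset.mem_filter, Finset.mem_filter] at hw
    obtain ⟨⟨hw1, hw2⟩, hw3⟩ := hw
    have hnlt : ¬ posV fX fY w < posV fX fY v := fun h => hw3 ⟨hw1, h⟩
    have hne : posV fX fY w ≠ posV fX fY v := fun he =>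
      (hwprops w hw1).1 (posV_inj fX fY (hwprops w hw1).2 he)
    rw [DisFiber, Finset.mem_filter, ← hv]
    exact ⟨hw1, Or.inl ⟨hw2, lt_of_le_of_ne (not_lt.mp hnlt) hne.symm⟩⟩
  have h1 : A.card ≤ B.card + (A \ B).card := by
    have := Finset.card_inter_add_card_sdiff A B
    have h2 : (A ∩ B).card ≤ B.card := Finset.card_le_card (Finset.inter_subset_right)
    omega
  have h2 : B.card ≤ A.card + (B \ A).card := by
    have := Finset.card_inter_add_card_sdiff B A
    have h3 : (B ∩ A).card ≤ A.card := Finset.card_le_card (Finset.inter_subset_right)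
    omega
  have h3 : (A \ B).card ≤ (DisFiber E fX fY root i).card := Finset.card_le_card hABsub
  have h4 : (B \ A).card ≤ (DisFiber E fX fY root i).card := Finset.card_le_card hBAsub
  rw [dInt]
  have hT : TrueRk E fX fY root i = A.card := rfl
  have hC : CanonRk E fX fY root i = B.card := rfl
  rw [hT, hC]
  omega

end Ranks

section Charge
open scoped Classical

def crossPairs : Finset ((X × Y) × (X × Y)) :=
  (E ×ˢ E).filter fun p => fX p.1.1 < fX p.2.1 ∧ fY p.2.2 < fY p.1.2

noncomputable def SsetX (a b : X ⊕ Y) : Finset ((X × Y) × (X × Y)) :=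
  (crossPairs E fX fY).filter fun p =>
    (Sum.inl p.1.1 = a ∧ Sum.inl p.2.1 = b) ∨ (Sum.inl p.1.1 = b ∧ Sum.inl p.2.1 = a)

noncomputable def SsetY (a b : X ⊕ Y) : Finset ((X × Y) × (X × Y)) :=
  (crossPairs E fX fY).filter fun p =>
    (Sum.inr p.1.2 = a ∧ Sum.inr p.2.2 = b) ∨ (Sum.inr p.1.2 = b ∧ Sum.inr p.2.2 = a)

lemma mem_E_of_adj {x : X} {y : Y} (h : (biGraph E).Adj (Sum.inl x) (Sum.inr y)) :
    (x, y) ∈ E := h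

lemma posV_inl (x : X) : posV fX fY (Sum.inl x) = (fX x : ℕ) := rfl
lemma posV_inr (y : Y) : posV fX fY (Sum.inr y) = (fY y : ℕ) := rfl

variable (hconn : (biGraph E).Connected)

include hconn in
lemma parent_inr {a : X ⊕ Y} (ha : a.isLeft = true) (har : a ≠ Sum.inl root) :
    ∃ y : Y, parentV E root a = Sum.inr y := by
  have hadj := parentV_adj E root hconn har
  have hside := adj_sides E hadj
  cases hp : parentV E root a with
  | inl x => rw [hp] at hside; simp [ha] at hside
  | inr y => exact ⟨y, rfl⟩

include hconn in
lemma parent_inl {a : X ⊕ Y} (ha : a.isLeft = false) (har : a ≠ Sum.inl root) :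
    ∃ x : X, parentV E root a = Sum.inl x := by
  have hadj := parentV_adj E root hconn har
  have hside := adj_sides E hadj
  cases hp : parentV E root a with
  | inl x => exact ⟨x, rfl⟩
  | inr y => rw [hp] at hside; simp [ha] at hside

include hconn in
lemma leaf_of_extras_empty {a : X ⊕ Y} (har : a ≠ Sum.inl root)
    (h : extras E root a = ∅) : IsLeaf E a := by
  have hadj := parentV_adj E root hconn har
  have hmem : parentV E root a ∈ (biGraph E).neighborFinset a :=
    (SimpleGraph.mem_neighborFinset _ _ _).mpr hadj
  have : (biGraph E).neighborFinset a = {parentV E root a} := by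
    rcases (Finset.erase_eq_empty_iff _ _).mp h with h' | h'
    · exact absurd (h' ▸ hmem) (Finset.notMem_empty _)
    · exact h'
  rw [IsLeaf, SimpleGraph.degree, this, Finset.card_singleton]

include hconn in
lemma SsetX_nonempty (hns : NoSiblingPairs E) (hroot : (fX root : ℕ) = 0)
    {a b : X ⊕ Y} (hal : a.isLeft = true) (hbl : b.isLeft = true)
    (hprec : precV E fX fY root a b) (hpos : posV fX fY b < posV fX fY a) :
    (SsetX E fX fY a b).Nonempty := by
  have haroot : a ≠ Sum.inl root := by
    rintro rfl
    rw [posV_inl, hroot] at hpos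
    omega
  obtain ⟨hbroot, -, hkey⟩ : b ≠ Sum.inl root ∧ a ≠ Sum.inl root ∧ _ :=
    hprec.resolve_left haroot
  obtain ⟨ax, rfl⟩ := Sum.isLeft_iff.mp hal
  obtain ⟨bx, rfl⟩ := Sum.isLeft_iff.mp hbl
  obtain ⟨pay, hpay⟩ := parent_inr E root hconn hal haroot
  obtain ⟨pby, hpby⟩ := parent_inr E root hconn hbl hbroot
  have hEa : (ax, pay) ∈ E := by
    have := parentV_adj E root hconn haroot
    rw [hpay] at this
    exact this
  have hEb : (bx, pby) ∈ E := by
    have := parentV_adj E root hconn hbroot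
    rw [hpby] at this
    exact this
  have hfx : fX bx < fX ax := by
    rw [posV_inl, posV_inl] at hpos
    exact hpos
  rcases hkey with hlt | ⟨heqp, hkey2⟩
  · -- parents at different positions
    refine ⟨((bx, pby), (ax, pay)), ?_⟩
    rw [SsetX, Finset.mem_filter, crossPairs, Finset.mem_filter]
    refine ⟨⟨Finset.mem_product.mpr ⟨hEb, hEa⟩, hfx, ?_⟩, Or.inr ⟨rfl, rfl⟩⟩
    rw [hpay, hpby, posV_inr, posV_inr] at hlt
    exact hlt
  · -- same parent
    have hpp : parentV E root (Sum.inl bx) = parentV E root (Sum.inl ax) := by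
      apply posV_inj fX fY _ heqp.symm
      simp [hpay, hpby]
    have hpaypby : pby = pay := by
      rw [hpby, hpay] at hpp
      exact Sum.inr.inj hpp
    by_cases hta : typeOf E fX fY root (Sum.inl ax) = 0
    · -- a has an extra strictly below the common parent
      obtain ⟨⟨u, hu⟩, hbel⟩ := typeOf_zero_below E fX fY root hta
      have huside : u.isLeft = false := by
        have h := extras_side E root hconn haroot hu
        rw [hpay] at h
        simpa using h
      cases u with
      | inl ux => simp at huside
      | inr uy =>
        have hEu : (ax, uy) ∈ E := extras_adj E root hu
        have hbelow := hbel _ hu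
        rw [hpay, posV_inr, posV_inr] at hbelow
        refine ⟨((bx, pby), (ax, uy)), ?_⟩
        rw [SsetX, Finset.mem_filter, crossPairs, Finset.mem_filter]
        refine ⟨⟨Finset.mem_product.mpr ⟨hEb, hEu⟩, hfx, ?_⟩, Or.inr ⟨rfl, rfl⟩⟩
        rw [hpaypby]
        exact Fin.lt_def.mpr hbelow
    · have hta' : (typeOf E fX fY root (Sum.inl ax) : ℕ) ≠ 0 := fun h => hta (Fin.ext h)
      have hle : (typeOf E fX fY root (Sum.inl ax) : ℕ) ≤
          (typeOf E fX fY root (Sum.inl bx) : ℕ) := by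
        rcases hkey2 with h | ⟨h, _⟩
        · omega
        · rw [h]
      have h4b : (typeOf E fX fY root (Sum.inl bx) : ℕ) < 4 :=
        (typeOf E fX fY root (Sum.inl bx)).isLt
      by_cases htb : 2 ≤ (typeOf E fX fY root (Sum.inl bx) : ℕ)
      · -- b has an extra strictly above the common parent
        have htb23 : typeOf E fX fY root (Sum.inl bx) = 2 ∨
            typeOf E fX fY root (Sum.inl bx) = 3 := by
          rcases Nat.lt_or_ge (typeOf E fX fY root (Sum.inl bx) : ℕ) 3 with h | h
          · exact Or.inl (Fin.ext (by omega))
          · exact Or.inr (Fin.ext (by omega))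
        obtain ⟨u, hu, habove⟩ := typeOf_above E fX fY root hconn hbroot htb23
        have huside : u.isLeft = false := by
          have h := extras_side E root hconn hbroot hu
          rw [hpby] at h
          simpa using h
        cases u with
        | inl ux => simp at huside
        | inr uy =>
          have hEu : (bx, uy) ∈ E := extras_adj E root hu
          rw [hpby, posV_inr, posV_inr] at habove
          refine ⟨((bx, uy), (ax, pay)), ?_⟩
          rw [SsetX, Finset.mem_filter, crossPairs, Finset.mem_filter]
          refine ⟨⟨Finset.mem_product.mpr ⟨hEu, hEa⟩, hfx, ?_⟩, Or.inr ⟨rfl, rfl⟩⟩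
          have : (fY pay : ℕ) < (fY uy : ℕ) := hpaypby ▸ habove
          exact Fin.lt_def.mpr this
      · -- both leaves: contradiction with no sibling pairs
        exfalso
        have hta1 : typeOf E fX fY root (Sum.inl ax) = 1 := Fin.ext (by omega)
        have htb1 : typeOf E fX fY root (Sum.inl bx) = 1 := Fin.ext (by omega)
        have hLa : IsLeaf E (Sum.inl ax) :=
          leaf_of_extras_empty E root hconn haroot (typeOf_eq_one E fX fY root hta1)
        have hLb : IsLeaf E (Sum.inl bx) :=
          leaf_of_extras_empty E root hconn hbroot (typeOf_eq_one E fX fY root htb1)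
        have hne : Sum.inl ax ≠ (Sum.inl bx : X ⊕ Y) := by
          intro h
          have : ax = bx := Sum.inl.inj h
          rw [this] at hfx
          exact lt_irrefl _ hfx
        have hadjA : (biGraph E).Adj (Sum.inl ax) (Sum.inr pay) := by
          have := parentV_adj E root hconn haroot
          rwa [hpay] at this
        have hadjB : (biGraph E).Adj (Sum.inl bx) (Sum.inr pay) := by
          have := parentV_adj E root hconn hbroot
          rwa [hpby, hpaypby] at this
        exact hns _ _ hne hLa hLb _ ⟨hadjA, hadjB⟩

include hconn in
lemma SsetY_nonempty (hns : NoSiblingPairs E) (hroot : (fX root : ℕ) = 0)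
    {a b : X ⊕ Y} (hal : a.isLeft = false) (hbl : b.isLeft = false)
    (hprec : precV E fX fY root a b) (hpos : posV fX fY b < posV fX fY a) :
    (SsetY E fX fY a b).Nonempty := by
  have haroot : a ≠ Sum.inl root := by rintro rfl; simp at hal
  have hbroot : b ≠ Sum.inl root := by rintro rfl; simp at hbl
  obtain ⟨-, -, hkey⟩ : b ≠ Sum.inl root ∧ a ≠ Sum.inl root ∧ _ :=
    hprec.resolve_left haroot
  obtain ⟨ay, rfl⟩ : ∃ y, a = Sum.inr y := by
    cases a
    · simp at hal
    · exact ⟨_, rfl⟩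
  obtain ⟨by', rfl⟩ : ∃ y, b = Sum.inr y := by
    cases b
    · simp at hbl
    · exact ⟨_, rfl⟩
  obtain ⟨pax, hpax⟩ := parent_inl E root hconn hal haroot
  obtain ⟨pbx, hpbx⟩ := parent_inl E root hconn hbl hbroot
  have hEa : (pax, ay) ∈ E := by
    have := parentV_adj E root hconn haroot
    rw [hpax] at this
    exact this
  have hEb : (pbx, by') ∈ E := by
    have := parentV_adj E root hconn hbroot
    rw [hpbx] at this
    exact this
  have hfy : fY by' < fY ay := by
    rw [posV_inr, posV_inr] at hpos
    exact hpos
  rcases hkey with hlt | ⟨heqp, hkey2⟩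
  · refine ⟨((pax, ay), (pbx, by')), ?_⟩
    rw [SsetY, Finset.mem_filter, crossPairs, Finset.mem_filter]
    refine ⟨⟨Finset.mem_product.mpr ⟨hEa, hEb⟩, ?_, hfy⟩, Or.inl ⟨rfl, rfl⟩⟩
    rw [hpax, hpbx, posV_inl, posV_inl] at hlt
    exact hlt
  · have hpp : parentV E root (Sum.inr by') = parentV E root (Sum.inr ay) := by
      apply posV_inj fX fY _ heqp.symm
      simp [hpax, hpbx]
    have hpaxpbx : pbx = pax := by
      rw [hpbx, hpax] at hpp
      exact Sum.inl.inj hpp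
    by_cases hta : typeOf E fX fY root (Sum.inr ay) = 0
    · obtain ⟨⟨u, hu⟩, hbel⟩ := typeOf_zero_below E fX fY root hta
      have huside : u.isLeft = true := by
        have h := extras_side E root hconn haroot hu
        rw [hpax] at h
        simpa using h
      cases u with
      | inr uy => simp at huside
      | inl ux =>
        have hEu : (ux, ay) ∈ E := extras_adj E root hu
        have hbelow := hbel _ hu
        rw [hpax, posV_inl, posV_inl] at hbelow
        refine ⟨((ux, ay), (pbx, by')), ?_⟩
        rw [SsetY, Finset.mem_filter, crossPairs, Finset.mem_filter]
        refine ⟨⟨Finset.mem_product.mpr ⟨hEu, hEb⟩, ?_, hfy⟩, Or.inl ⟨rfl, rfl⟩⟩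
        rw [hpaxpbx]
        exact Fin.lt_def.mpr hbelow
    · have hta' : (typeOf E fX fY root (Sum.inr ay) : ℕ) ≠ 0 := fun h => hta (Fin.ext h)
      have hle : (typeOf E fX fY root (Sum.inr ay) : ℕ) ≤
          (typeOf E fX fY root (Sum.inr by') : ℕ) := by
        rcases hkey2 with h | ⟨h, _⟩
        · omega
        · rw [h]
      have h4b : (typeOf E fX fY root (Sum.inr by') : ℕ) < 4 :=
        (typeOf E fX fY root (Sum.inr by')).isLt
      by_cases htb : 2 ≤ (typeOf E fX fY root (Sum.inr by') : ℕ)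
      · have htb23 : typeOf E fX fY root (Sum.inr by') = 2 ∨
            typeOf E fX fY root (Sum.inr by') = 3 := by
          rcases Nat.lt_or_ge (typeOf E fX fY root (Sum.inr by') : ℕ) 3 with h | h
          · exact Or.inl (Fin.ext (by omega))
          · exact Or.inr (Fin.ext (by omega))
        obtain ⟨u, hu, habove⟩ := typeOf_above E fX fY root hconn hbroot htb23
        have huside : u.isLeft = true := by
          have h := extras_side E root hconn hbroot hu
          rw [hpbx] at h
          simpa using h
        cases u with
        | inr uy => simp at huside
        | inl ux =>
          have hEu : (ux, by') ∈ E := extras_adj E root hu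
          rw [hpbx, posV_inl, posV_inl] at habove
          refine ⟨((pax, ay), (ux, by')), ?_⟩
          rw [SsetY, Finset.mem_filter, crossPairs, Finset.mem_filter]
          refine ⟨⟨Finset.mem_product.mpr ⟨hEa, hEu⟩, ?_, hfy⟩, Or.inl ⟨rfl, rfl⟩⟩
          have : (fX pax : ℕ) < (fX ux : ℕ) := hpaxpbx ▸ habove
          exact Fin.lt_def.mpr this
      · exfalso
        have hta1 : typeOf E fX fY root (Sum.inr ay) = 1 := Fin.ext (by omega)
        have htb1 : typeOf E fX fY root (Sum.inr by') = 1 := Fin.ext (by omega)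
        have hLa : IsLeaf E (Sum.inr ay) :=
          leaf_of_extras_empty E root hconn haroot (typeOf_eq_one E fX fY root hta1)
        have hLb : IsLeaf E (Sum.inr by') :=
          leaf_of_extras_empty E root hconn hbroot (typeOf_eq_one E fX fY root htb1)
        have hne : Sum.inr ay ≠ (Sum.inr by' : X ⊕ Y) := by
          intro h
          have : ay = by' := Sum.inr.inj h
          rw [this] at hfy
          exact lt_irrefl _ hfy
        have hadjA : (biGraph E).Adj (Sum.inr ay) (Sum.inl pax) := by
          have := parentV_adj E root hconn haroot
          rwa [hpax] at this
        have hadjB : (biGraph E).Adj (Sum.inr by') (Sum.inl pax) := by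
          have := parentV_adj E root hconn hbroot
          rwa [hpbx, hpaxpbx] at this
        exact hns _ _ hne hLa hLb _ ⟨hadjA, hadjB⟩

lemma precV_asymm {a b : X ⊕ Y} (hne : a ≠ b) (hab : precV E fX fY root a b) :
    ¬ precV E fX fY root b a := by
  intro hba
  rcases hab with h | ⟨hb, ha, hk⟩
  · rcases hba with h' | ⟨hb', _, _⟩
    · exact hne (h.trans h'.symm)
    · exact hb' h
  · rcases hba with h' | ⟨hb'', ha'', hk'⟩
    · exact hb h'
    · rcases hk with h1 | ⟨h1, h2⟩ <;> rcases hk' with h1' | ⟨h1', h2'⟩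
      · omega
      · omega
      · omega
      · rcases h2 with h3 | ⟨h3, h4⟩ <;> rcases h2' with h3' | ⟨h3', h4'⟩
        · omega
        · rw [h3'] at h3; omega
        · rw [h3] at h3'; omega
        · exact absurd h4' (not_lt.mpr (le_of_lt h4))

open scoped Classical in
/-- all disagreement pairs (step of later element, earlier element) -/
noncomputable def DisSide (lr : Bool) : Finset (ℕ × (X ⊕ Y)) :=
  (Finset.range (N (X := X) (Y := Y))).biUnion (fun i =>
    ((DisFiber E fX fY root i).filter (fun w => w.isLeft = lr)).image (fun w => (i, w)))

lemma card_DisSide (lr : Bool) :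
    (DisSide E fX fY root lr).card =
      ∑ i ∈ Finset.range (N (X := X) (Y := Y)),
        ((DisFiber E fX fY root i).filter (fun w => w.isLeft = lr)).card := by
  classical
  rw [DisSide, Finset.card_biUnion]
  · refine Finset.sum_congr rfl (fun i _ => ?_)
    rw [Finset.card_image_of_injective _ (fun w w' h => (Prod.mk.injEq _ _ _ _).mp h |>.2)]
  · intro i _ j _ hij
    simp only [Finset.disjoint_left, Finset.mem_image]
    rintro z ⟨w, _, rfl⟩ ⟨w', _, h⟩
    exact hij ((Prod.mk.injEq _ _ _ _).mp h).1.symm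

variable (hconn : (biGraph E).Connected)

include hconn in
lemma disSide_unpack {lr : Bool} {z : ℕ × (X ⊕ Y)}
    (hz : z ∈ DisSide E fX fY root lr) :
    z.1 < N (X := X) (Y := Y) ∧ z.2 ∈ pl E root z.1 ∧
      z.2.isLeft = lr ∧ (seq E root z.1).isLeft = lr ∧ z.2 ≠ seq E root z.1 ∧
      ((precV E fX fY root z.2 (seq E root z.1) ∧
          posV fX fY (seq E root z.1) < posV fX fY z.2) ∨
        (precV E fX fY root (seq E root z.1) z.2 ∧
          posV fX fY z.2 < posV fX fY (seq E root z.1))) := by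
  classical
  rw [DisSide, Finset.mem_biUnion] at hz
  obtain ⟨i, hi, hz⟩ := hz
  rw [Finset.mem_image] at hz
  obtain ⟨w, hw, rfl⟩ := hz
  rw [Finset.mem_filter] at hw
  obtain ⟨hw, hlr⟩ := hw
  rw [DisFiber, Finset.mem_filter] at hw
  obtain ⟨hw1, hw2⟩ := hw
  rw [plss, Finset.mem_filter] at hw1
  rw [Finset.mem_range] at hi
  refine ⟨hi, hw1.1, hlr, by rw [← hw1.2, hlr], ?_, hw2⟩
  intro h
  exact seq_notin E root hconn hi (h ▸ hw1.1)

include hconn in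
lemma pair_structure {lr : Bool} {z : ℕ × (X ⊕ Y)}
    (hz : z ∈ DisSide E fX fY root lr) :
    ∃ a b : X ⊕ Y, ({a, b} : Finset (X ⊕ Y)) = {z.2, seq E root z.1} ∧
      a.isLeft = lr ∧ b.isLeft = lr ∧
      precV E fX fY root a b ∧ posV fX fY b < posV fX fY a := by
  obtain ⟨hi, hpl, hlr, hslr, hne, hdis⟩ := disSide_unpack E fX fY root hconn hz
  rcases hdis with ⟨hp, hlt⟩ | ⟨hp, hlt⟩
  · exact ⟨z.2, seq E root z.1, rfl, hlr, hslr, hp, hlt⟩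
  · exact ⟨seq E root z.1, z.2, Finset.pair_comm _ _, hslr, hlr, hp, hlt⟩

include hconn in
lemma card_DisSide_left_le (hns : NoSiblingPairs E) (hroot : (fX root : ℕ) = 0)
    (e₀ : (X × Y) × (X × Y)) :
    (DisSide E fX fY root true).card ≤ crossNum E fX fY := by
  classical
  have hcp : crossNum E fX fY = (crossPairs E fX fY).card := rfl
  rw [hcp]
  set φ : ℕ × (X ⊕ Y) → ((X × Y) × (X × Y)) := fun z =>
    if h : ∃ p, p ∈ (crossPairs E fX fY) ∧
        ((Sum.inl p.1.1 = z.2 ∧ Sum.inl p.2.1 = seq E root z.1) ∨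
          (Sum.inl p.1.1 = seq E root z.1 ∧ Sum.inl p.2.1 = z.2))
    then h.choose else e₀ with hφ
  have hmem : ∀ z ∈ DisSide E fX fY root true,
      φ z ∈ crossPairs E fX fY ∧
        ((Sum.inl (φ z).1.1 = z.2 ∧ Sum.inl (φ z).2.1 = seq E root z.1) ∨
          (Sum.inl (φ z).1.1 = seq E root z.1 ∧ Sum.inl (φ z).2.1 = z.2)) := by
    intro z hz
    obtain ⟨a, b, hab, hal, hbl, hp, hlt⟩ := pair_structure E fX fY root hconn hz
    obtain ⟨p, hpmem⟩ := SsetX_nonempty E fX fY root hconn hns hroot hal hbl hp hlt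
    rw [SsetX, Finset.mem_filter] at hpmem
    have hex : ∃ p, p ∈ (crossPairs E fX fY) ∧
        ((Sum.inl p.1.1 = z.2 ∧ Sum.inl p.2.1 = seq E root z.1) ∨
          (Sum.inl p.1.1 = seq E root z.1 ∧ Sum.inl p.2.1 = z.2)) := by
      refine ⟨p, hpmem.1, ?_⟩
      -- {a,b} = {z.2, seq}: transfer the disjunction
      have h2 := hpmem.2
      have hmem_a : a ∈ ({z.2, seq E root z.1} : Finset (X ⊕ Y)) := by
        rw [← hab]; simp
      have hmem_b : b ∈ ({z.2, seq E root z.1} : Finset (X ⊕ Y)) := by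
        rw [← hab]; simp
      simp only [Finset.mem_insert, Finset.mem_singleton] at hmem_a hmem_b
      have hne : z.2 ≠ seq E root z.1 :=
        (disSide_unpack E fX fY root hconn hz).2.2.2.2.1
      have habne : a ≠ b := by
        intro h
        rw [h] at hlt
        exact lt_irrefl _ hlt
      rcases h2 with ⟨h3, h4⟩ | ⟨h3, h4⟩ <;>
        rcases hmem_a with ha | ha <;> rcases hmem_b with hb | hb <;>
          first
            | (exact absurd (ha.trans hb.symm) habne)
            | (exact Or.inl ⟨h3.trans ha, h4.trans hb⟩)
            | (exact Or.inr ⟨h3.trans ha, h4.trans hb⟩)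
            | (exact Or.inr ⟨h3.trans hb, h4.trans ha⟩)
            | (exact Or.inl ⟨h3.trans hb, h4.trans ha⟩)
    rw [hφ]
    simp only [dif_pos hex]
    exact hex.choose_spec
  apply Finset.card_le_card_of_injOn φ
  · intro z hz
    exact (hmem z hz).1
  · intro z1 hz1 z2 hz2 heq
    have h1 := (hmem z1 hz1).2
    have h2 := (hmem z2 hz2).2
    rw [heq] at h1
    have u1 := disSide_unpack E fX fY root hconn hz1
    have u2 := disSide_unpack E fX fY root hconn hz2
    -- {z1.2, seq i1} = {z2.2, seq i2}
    have hkey : (z1.2 = z2.2 ∧ seq E root z1.1 = seq E root z2.1) ∨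
        (z1.2 = seq E root z2.1 ∧ seq E root z1.1 = z2.2) := by
      rcases h1 with ⟨a1, b1⟩ | ⟨a1, b1⟩ <;> rcases h2 with ⟨a2, b2⟩ | ⟨a2, b2⟩
      · exact Or.inl ⟨a1.symm.trans a2, b1.symm.trans b2⟩
      · exact Or.inr ⟨a1.symm.trans a2, b1.symm.trans b2⟩
      · exact Or.inr ⟨b1.symm.trans b2, a1.symm.trans a2⟩
      · exact Or.inl ⟨b1.symm.trans b2, a1.symm.trans a2⟩
    rcases hkey with ⟨hA, hB⟩ | ⟨hA, hB⟩
    · have : z1.1 = z2.1 := seq_inj E root hconn u1.1 u2.1 hB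
      exact Prod.ext this hA
    · exfalso
      have m1 : seq E root z2.1 ∈ pl E root z1.1 := hA ▸ u1.2.1
      have m2 : seq E root z1.1 ∈ pl E root z2.1 := hB ▸ u2.2.1
      obtain ⟨j1, hj1, hsj1⟩ := (mem_pl E root).mp m1
      obtain ⟨j2, hj2, hsj2⟩ := (mem_pl E root).mp m2
      have e1 : j1 = z2.1 := seq_inj E root hconn (lt_trans hj1 u1.1) u2.1 hsj1
      have e2 : j2 = z1.1 := seq_inj E root hconn (lt_trans hj2 u2.1) u1.1 hsj2
      omega

include hconn in
lemma card_DisSide_right_le (hns : NoSiblingPairs E) (hroot : (fX root : ℕ) = 0)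
    (e₀ : (X × Y) × (X × Y)) :
    (DisSide E fX fY root false).card ≤ crossNum E fX fY := by
  classical
  have hcp : crossNum E fX fY = (crossPairs E fX fY).card := rfl
  rw [hcp]
  set φ : ℕ × (X ⊕ Y) → ((X × Y) × (X × Y)) := fun z =>
    if h : ∃ p, p ∈ (crossPairs E fX fY) ∧
        ((Sum.inr p.1.2 = z.2 ∧ Sum.inr p.2.2 = seq E root z.1) ∨
          (Sum.inr p.1.2 = seq E root z.1 ∧ Sum.inr p.2.2 = z.2))
    then h.choose else e₀ with hφ
  have hmem : ∀ z ∈ DisSide E fX fY root false,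
      φ z ∈ crossPairs E fX fY ∧
        ((Sum.inr (φ z).1.2 = z.2 ∧ Sum.inr (φ z).2.2 = seq E root z.1) ∨
          (Sum.inr (φ z).1.2 = seq E root z.1 ∧ Sum.inr (φ z).2.2 = z.2)) := by
    intro z hz
    obtain ⟨a, b, hab, hal, hbl, hp, hlt⟩ := pair_structure E fX fY root hconn hz
    obtain ⟨p, hpmem⟩ := SsetY_nonempty E fX fY root hconn hns hroot hal hbl hp hlt
    rw [SsetY, Finset.mem_filter] at hpmem
    have hex : ∃ p, p ∈ (crossPairs E fX fY) ∧
        ((Sum.inr p.1.2 = z.2 ∧ Sum.inr p.2.2 = seq E root z.1) ∨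
          (Sum.inr p.1.2 = seq E root z.1 ∧ Sum.inr p.2.2 = z.2)) := by
      refine ⟨p, hpmem.1, ?_⟩
      -- {a,b} = {z.2, seq}: transfer the disjunction
      have h2 := hpmem.2
      have hmem_a : a ∈ ({z.2, seq E root z.1} : Finset (X ⊕ Y)) := by
        rw [← hab]; simp
      have hmem_b : b ∈ ({z.2, seq E root z.1} : Finset (X ⊕ Y)) := by
        rw [← hab]; simp
      simp only [Finset.mem_insert, Finset.mem_singleton] at hmem_a hmem_b
      have hne : z.2 ≠ seq E root z.1 :=
        (disSide_unpack E fX fY root hconn hz).2.2.2.2.1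
      have habne : a ≠ b := by
        intro h
        rw [h] at hlt
        exact lt_irrefl _ hlt
      rcases h2 with ⟨h3, h4⟩ | ⟨h3, h4⟩ <;>
        rcases hmem_a with ha | ha <;> rcases hmem_b with hb | hb <;>
          first
            | (exact absurd (ha.trans hb.symm) habne)
            | (exact Or.inl ⟨h3.trans ha, h4.trans hb⟩)
            | (exact Or.inr ⟨h3.trans ha, h4.trans hb⟩)
            | (exact Or.inr ⟨h3.trans hb, h4.trans ha⟩)
            | (exact Or.inl ⟨h3.trans hb, h4.trans ha⟩)
    rw [hφ]
    simp only [dif_pos hex]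
    exact hex.choose_spec
  apply Finset.card_le_card_of_injOn φ
  · intro z hz
    exact (hmem z hz).1
  · intro z1 hz1 z2 hz2 heq
    have h1 := (hmem z1 hz1).2
    have h2 := (hmem z2 hz2).2
    rw [heq] at h1
    have u1 := disSide_unpack E fX fY root hconn hz1
    have u2 := disSide_unpack E fX fY root hconn hz2
    -- {z1.2, seq i1} = {z2.2, seq i2}
    have hkey : (z1.2 = z2.2 ∧ seq E root z1.1 = seq E root z2.1) ∨
        (z1.2 = seq E root z2.1 ∧ seq E root z1.1 = z2.2) := by
      rcases h1 with ⟨a1, b1⟩ | ⟨a1, b1⟩ <;> rcases h2 with ⟨a2, b2⟩ | ⟨a2, b2⟩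
      · exact Or.inl ⟨a1.symm.trans a2, b1.symm.trans b2⟩
      · exact Or.inr ⟨a1.symm.trans a2, b1.symm.trans b2⟩
      · exact Or.inr ⟨b1.symm.trans b2, a1.symm.trans a2⟩
      · exact Or.inl ⟨b1.symm.trans b2, a1.symm.trans a2⟩
    rcases hkey with ⟨hA, hB⟩ | ⟨hA, hB⟩
    · have : z1.1 = z2.1 := seq_inj E root hconn u1.1 u2.1 hB
      exact Prod.ext this hA
    · exfalso
      have m1 : seq E root z2.1 ∈ pl E root z1.1 := hA ▸ u1.2.1
      have m2 : seq E root z1.1 ∈ pl E root z2.1 := hB ▸ u2.2.1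
      obtain ⟨j1, hj1, hsj1⟩ := (mem_pl E root).mp m1
      obtain ⟨j2, hj2, hsj2⟩ := (mem_pl E root).mp m2
      have e1 : j1 = z2.1 := seq_inj E root hconn (lt_trans hj1 u1.1) u2.1 hsj1
      have e2 : j2 = z1.1 := seq_inj E root hconn (lt_trans hj2 u2.1) u1.1 hsj2
      omega

include hconn in
lemma sum_natAbs_le (hns : NoSiblingPairs E) (hroot : (fX root : ℕ) = 0)
    (e₀ : (X × Y) × (X × Y)) :
    ∑ i ∈ Finset.range (N (X := X) (Y := Y)), (dInt E fX fY root i).natAbs ≤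
      2 * crossNum E fX fY := by
  classical
  have h2 : ∑ i ∈ Finset.range (N (X := X) (Y := Y)), (dInt E fX fY root i).natAbs ≤
      ∑ i ∈ Finset.range (N (X := X) (Y := Y)), (DisFiber E fX fY root i).card :=
    Finset.sum_le_sum (fun i hi =>
      natAbs_dInt_le E fX fY root hconn (Finset.mem_range.mp hi))
  have h3 : ∀ i : ℕ, (DisFiber E fX fY root i).card =
      ((DisFiber E fX fY root i).filter (fun w => w.isLeft = true)).card +
        ((DisFiber E fX fY root i).filter (fun w => w.isLeft = false)).card := by
    intro i
    have := Finset.card_filter_add_card_filter_not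
      (s := DisFiber E fX fY root i) (p := fun w => w.isLeft = true)
    rw [← this]
    congr 2
    ext w
    simp [Finset.mem_filter, Bool.not_eq_true]
  calc ∑ i ∈ Finset.range (N (X := X) (Y := Y)), (dInt E fX fY root i).natAbs
      ≤ ∑ i ∈ Finset.range (N (X := X) (Y := Y)), (DisFiber E fX fY root i).card := h2
    _ = (DisSide E fX fY root true).card + (DisSide E fX fY root false).card := by
        rw [card_DisSide, card_DisSide, ← Finset.sum_add_distrib]
        exact Finset.sum_congr rfl (fun i _ => h3 i)
    _ ≤ crossNum E fX fY + crossNum E fX fY :=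
        Nat.add_le_add (card_DisSide_left_le E fX fY root hconn hns hroot e₀)
          (card_DisSide_right_le E fX fY root hconn hns hroot e₀)
    _ = 2 * crossNum E fX fY := by ring

def encInt (z : ℤ) : ℕ := if 0 ≤ z then 2 * z.toNat else 2 * z.natAbs - 1

lemma encInt_le (z : ℤ) : encInt z ≤ 2 * z.natAbs := by
  unfold encInt
  split_ifs <;> omega

lemma encInt_inj : Function.Injective encInt := by
  intro z1 z2 h
  unfold encInt at h
  split_ifs at h <;> omega

noncomputable def uval (i : ℕ) : ℕ := encInt (dInt E fX fY root i)

noncomputable def flagsF (j : Fin (N (X := X) (Y := Y) - 1)) : Fin 4 :=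
  typeOf E fX fY root (seq E root (j.val + 1))

noncomputable def ucodeF (j : Fin (N (X := X) (Y := Y) - 2)) : ℕ :=
  uval E fX fY root (j.val + 2)

include hconn in
lemma sum_ucode_le (hns : NoSiblingPairs E) (hroot : (fX root : ℕ) = 0)
    (e₀ : (X × Y) × (X × Y)) (hN : 2 ≤ N (X := X) (Y := Y)) {k : ℕ}
    (hcross : crossNum E fX fY ≤ k) :
    ∑ j : Fin (N (X := X) (Y := Y) - 2), ucodeF E fX fY root j ≤ 4 * k := by
  classical
  have h1 : ∑ j : Fin (N (X := X) (Y := Y) - 2), ucodeF E fX fY root j ≤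
      ∑ j : Fin (N (X := X) (Y := Y) - 2), 2 * (dInt E fX fY root (j.val + 2)).natAbs :=
    Finset.sum_le_sum (fun j _ => encInt_le _)
  have h2 : ∑ j : Fin (N (X := X) (Y := Y) - 2), 2 * (dInt E fX fY root (j.val + 2)).natAbs
      = 2 * ∑ i ∈ Finset.range (N (X := X) (Y := Y) - 2),
          (dInt E fX fY root (i + 2)).natAbs := by
    rw [Finset.mul_sum, Fin.sum_univ_eq_sum_range
      (fun i => 2 * (dInt E fX fY root (i + 2)).natAbs)]
  have h3 : ∑ i ∈ Finset.range (N (X := X) (Y := Y) - 2),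
      (dInt E fX fY root (i + 2)).natAbs ≤
        ∑ i ∈ Finset.range (N (X := X) (Y := Y)), (dInt E fX fY root i).natAbs := by
    have hN2 : (2 : ℕ) + (N (X := X) (Y := Y) - 2) = N (X := X) (Y := Y) := by omega
    calc ∑ i ∈ Finset.range (N (X := X) (Y := Y) - 2), (dInt E fX fY root (i + 2)).natAbs
        = ∑ i ∈ Finset.range (N (X := X) (Y := Y) - 2), (dInt E fX fY root (2 + i)).natAbs := by
          refine Finset.sum_congr rfl (fun i _ => ?_)
          rw [Nat.add_comm]
      _ ≤ (∑ i ∈ Finset.range 2, (dInt E fX fY root i).natAbs) +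
            ∑ i ∈ Finset.range (N (X := X) (Y := Y) - 2),
              (dInt E fX fY root (2 + i)).natAbs := Nat.le_add_left _ _
      _ = ∑ i ∈ Finset.range (2 + (N (X := X) (Y := Y) - 2)),
            (dInt E fX fY root i).natAbs := (Finset.sum_range_add _ 2 _).symm
      _ = ∑ i ∈ Finset.range (N (X := X) (Y := Y)), (dInt E fX fY root i).natAbs := by
          rw [hN2]
  have h4 := sum_natAbs_le E fX fY root hconn hns hroot e₀
  omega

include hconn in
lemma rank_iff {i : ℕ} (hi : i < N (X := X) (Y := Y)) {w : X ⊕ Y}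
    (hw : w ∈ plss E root i) :
    (posV fX fY w < posV fX fY (seq E root i) ↔
      ((plss E root i).filter (fun x => posV fX fY x < posV fX fY w)).card <
        TrueRk E fX fY root i) := by
  have hwv : w ≠ seq E root i := fun he =>
    seq_notin E root hconn hi (he ▸ (Finset.mem_filter.mp hw).1)
  have hwside : w.isLeft = (seq E root i).isLeft := (Finset.mem_filter.mp hw).2
  constructor
  · intro h
    apply Finset.card_lt_card
    rw [Finset.ssubset_def]
    constructor
    · intro x hx
      rw [Finset.mem_filter] at *
      exact ⟨hx.1, lt_trans hx.2 h⟩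
    · intro hsub
      have hwmem : w ∈ (plss E root i).filter
          (fun x => posV fX fY x < posV fX fY (seq E root i)) :=
        Finset.mem_filter.mpr ⟨hw, h⟩
      have := hsub hwmem
      rw [Finset.mem_filter] at this
      exact lt_irrefl _ this.2
  · intro h
    by_contra hnot
    have hne : posV fX fY w ≠ posV fX fY (seq E root i) := fun he =>
      hwv (posV_inj fX fY hwside he)
    have hgt : posV fX fY (seq E root i) < posV fX fY w := by omega
    have hsub : (plss E root i).filter
        (fun x => posV fX fY x < posV fX fY (seq E root i)) ⊆
        (plss E root i).filter (fun x => posV fX fY x < posV fX fY w) := by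
      intro x hx
      rw [Finset.mem_filter] at *
      exact ⟨hx.1, lt_trans hx.2 hgt⟩
    have := Finset.card_le_card hsub
    rw [TrueRk] at h
    omega

include hconn in
lemma orders_eq (hN : 2 ≤ N (X := X) (Y := Y))
    (gX : X ≃ Fin (Fintype.card X)) (gY : Y ≃ Fin (Fintype.card Y))
    (hflags : ∀ j : Fin (N (X := X) (Y := Y) - 1),
      flagsF E fX fY root j = flagsF E gX gY root j)
    (hu : ∀ j : Fin (N (X := X) (Y := Y) - 2),
      ucodeF E fX fY root j = ucodeF E gX gY root j) :
    fX = gX := by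
  classical
  have main : ∀ i, i ≤ N (X := X) (Y := Y) → ∀ a ∈ pl E root i, ∀ b ∈ pl E root i,
      a.isLeft = b.isLeft →
      (posV fX fY a < posV fX fY b ↔ posV gX gY a < posV gX gY b) := by
    intro i
    induction i with
    | zero =>
      intro _ a ha
      rw [pl_zero] at ha
      exact absurd ha (Finset.notMem_empty _)
    | succ i ih =>
      intro hiN a ha b hb hside
      have hi : i < N (X := X) (Y := Y) := by omega
      have IH := ih (le_of_lt hi)
      -- canonical rank equality
      have hCanonSet : (plss E root i).filter
          (fun w => precV E fX fY root w (seq E root i)) =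
          (plss E root i).filter (fun w => precV E gX gY root w (seq E root i)) := by
        apply Finset.filter_congr
        intro w hw
        have hwpl : w ∈ pl E root i := (Finset.mem_filter.mp hw).1
        have hi1 : 1 ≤ i := by
          by_contra h0
          have : i = 0 := by omega
          rw [this, pl_zero] at hwpl
          exact absurd hwpl (Finset.notMem_empty _)
        have hvroot : seq E root i ≠ Sum.inl root := by
          intro h
          have h0 : seq E root 0 = Sum.inl root := seq_zero E root
          have := seq_inj E root hconn hi (by omega) (h.trans h0.symm)
          omega
        by_cases hwroot : w = Sum.inl root
        · simp [precV, hwroot]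
        · obtain ⟨jw, hjw, hjweq⟩ := (mem_pl E root).mp hwpl
          have hjw1 : 1 ≤ jw := by
            by_contra h0
            have : jw = 0 := by omega
            rw [this] at hjweq
            exact hwroot (hjweq.symm.trans (seq_zero E root))
          have htw : typeOf E fX fY root w = typeOf E gX gY root w := by
            have h := hflags ⟨jw - 1, by omega⟩
            rw [flagsF, flagsF] at h
            have hrw : jw - 1 + 1 = jw := by omega
            rw [hrw, hjweq] at h
            exact h
          have htv : typeOf E fX fY root (seq E root i) =
              typeOf E gX gY root (seq E root i) := by
            have h := hflags ⟨i - 1, by omega⟩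
            rw [flagsF, flagsF] at h
            have hrw : i - 1 + 1 = i := by omega
            rw [hrw] at h
            exact h
          have hpwmem : parentV E root w ∈ pl E root i := by
            have h1 := parentV_mem E root hconn hwroot
            have h2 : stepIdx E root w = jw := by
              rw [← hjweq, stepIdx_seq E root hconn (by omega)]
            rw [h2] at h1
            exact pl_mono E root (le_of_lt hjw) h1
          have hpvmem : parentV E root (seq E root i) ∈ pl E root i := by
            have h1 := parentV_mem E root hconn hvroot
            rw [stepIdx_seq E root hconn hi] at h1
            exact h1
          have hpside : (parentV E root w).isLeft =
              (parentV E root (seq E root i)).isLeft := by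
            have h1 := adj_sides E (parentV_adj E root hconn hwroot)
            have h2 := adj_sides E (parentV_adj E root hconn hvroot)
            have h3 : w.isLeft = (seq E root i).isLeft := (Finset.mem_filter.mp hw).2
            cases hpw : (parentV E root w).isLeft <;>
              cases hpv : (parentV E root (seq E root i)).isLeft <;> simp_all
          have hparlt := IH _ hpwmem _ hpvmem hpside
          have hpareq : (posV fX fY (parentV E root w) =
              posV fX fY (parentV E root (seq E root i))) ↔
              (posV gX gY (parentV E root w) =
                posV gX gY (parentV E root (seq E root i))) := by
            constructor <;> intro h
            · rw [posV_inj fX fY hpside h]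
            · rw [posV_inj gX gY hpside h]
          have hparlt2 := IH _ hpvmem _ hpwmem hpside.symm
          rw [precV, precV]
          constructor
          · rintro (h | ⟨h1, h2, h3⟩)
            · exact Or.inl h
            · refine Or.inr ⟨h1, h2, ?_⟩
              rcases h3 with h | ⟨heq, hk⟩
              · exact Or.inl (hparlt.mp h)
              · refine Or.inr ⟨hpareq.mp heq, ?_⟩
                rcases hk with h | ⟨h, htb⟩
                · rw [htw, htv] at h
                  exact Or.inl h
                · rw [htw] at h
                  rw [htv] at h
                  exact Or.inr ⟨h, htb⟩
          · rintro (h | ⟨h1, h2, h3⟩)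
            · exact Or.inl h
            · refine Or.inr ⟨h1, h2, ?_⟩
              rcases h3 with h | ⟨heq, hk⟩
              · exact Or.inl (hparlt.mpr h)
              · refine Or.inr ⟨hpareq.mpr heq, ?_⟩
                rcases hk with h | ⟨h, htb⟩
                · rw [← htw, ← htv] at h
                  exact Or.inl h
                · rw [← htw] at h
                  rw [← htv] at h
                  exact Or.inr ⟨h, htb⟩
      have hCanon : CanonRk E fX fY root i = CanonRk E gX gY root i := by
        rw [CanonRk, CanonRk, hCanonSet]
      have hD : dInt E fX fY root i = dInt E gX gY root i := by
        rcases Nat.lt_or_ge i 2 with h2 | h2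
        · have hplss : plss E root i = ∅ := by
            have h01 : i = 0 ∨ i = 1 := by omega
            rcases h01 with h0 | h1
            · rw [h0, plss, pl_zero, Finset.filter_empty]
            · rw [h1]
              have hpl1 : pl E root 1 = {Sum.inl root} := by
                rw [show (1 : ℕ) = 0 + 1 from rfl, pl_succ, pl_zero, seq_zero]
                rfl
              have hside1 : (seq E root 1).isLeft = false := by
                obtain ⟨u, hu, hadj⟩ := seq_adj_earlier E root hconn le_rfl (by omega)
                rw [hpl1, Finset.mem_singleton] at hu
                subst hu
                have := adj_sides E hadj
                simpa using this.symm
              rw [plss, hpl1]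
              ext w
              simp only [Finset.mem_filter, Finset.mem_singleton, Finset.notMem_empty,
                iff_false, not_and]
              rintro rfl
              rw [hside1]
              simp
          rw [dInt, dInt, TrueRk, TrueRk, CanonRk, CanonRk, hplss]
          simp
        · have h := hu ⟨i - 2, by omega⟩
          rw [ucodeF, ucodeF, uval, uval] at h
          have hrw : i - 2 + 2 = i := by omega
          rw [hrw] at h
          exact encInt_inj h
      have hTrue : TrueRk E fX fY root i = TrueRk E gX gY root i := by
        have h1 : (TrueRk E fX fY root i : ℤ) - CanonRk E fX fY root i =
            (TrueRk E gX gY root i : ℤ) - CanonRk E gX gY root i := hD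
        rw [hCanon] at h1
        omega
      have hRk : ∀ w' ∈ plss E root i,
          ((plss E root i).filter (fun x => posV fX fY x < posV fX fY w')).card =
            ((plss E root i).filter (fun x => posV gX gY x < posV gX gY w')).card := by
        intro w' hw'
        have : (plss E root i).filter (fun x => posV fX fY x < posV fX fY w') =
            (plss E root i).filter (fun x => posV gX gY x < posV gX gY w') := by
          apply Finset.filter_congr
          intro x hx
          exact IH x ((Finset.mem_filter.mp hx).1) w' ((Finset.mem_filter.mp hw').1)
            (((Finset.mem_filter.mp hx).2).trans ((Finset.mem_filter.mp hw').2).symm)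
        rw [this]
      have kc : ∀ w ∈ plss E root i,
          (posV fX fY w < posV fX fY (seq E root i) ↔
            posV gX gY w < posV gX gY (seq E root i)) := by
        intro w hw
        rw [rank_iff E fX fY root hconn hi hw, rank_iff E gX gY root hconn hi hw,
          hRk w hw, hTrue]
      -- now conclude for a b
      rw [pl_succ] at ha hb
      have hvni : seq E root i ∉ pl E root i := seq_notin E root hconn hi
      rcases Finset.mem_insert.mp ha with rfl | ha' <;>
        rcases Finset.mem_insert.mp hb with hbv | hb'
      · rw [hbv]
        constructor <;> intro h <;> exact absurd h (lt_irrefl _)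
      · -- a = seq i, b ∈ pl i
        have hbss : b ∈ plss E root i := Finset.mem_filter.mpr ⟨hb', hside.symm⟩
        have hbv : b ≠ seq E root i := fun he => hvni (he ▸ hb')
        have h1 := kc b hbss
        constructor
        · intro h
          by_contra hn
          have hne : posV gX gY b ≠ posV gX gY (seq E root i) := fun he =>
            hbv (posV_inj gX gY hside.symm he)
          have : posV gX gY b < posV gX gY (seq E root i) := by omega
          have := h1.mpr this
          omega
        · intro h
          by_contra hn
          have hne : posV fX fY b ≠ posV fX fY (seq E root i) := fun he =>
            hbv (posV_inj fX fY hside.symm he)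
          have : posV fX fY b < posV fX fY (seq E root i) := by omega
          have := h1.mp this
          omega
      · -- a ∈ pl i, b = seq i
        rw [hbv] at hside ⊢
        have hass : a ∈ plss E root i := Finset.mem_filter.mpr ⟨ha', hside⟩
        exact kc a hass
      · exact IH a ha' b hb' hside
  -- conclude fX = gX
  have horder : ∀ x x' : X, (fX x < fX x' ↔ gX x < gX x') := by
    intro x x'
    have h := main (N (X := X) (Y := Y)) le_rfl (Sum.inl x)
      (by rw [pl_univ E root hconn]; exact Finset.mem_univ _) (Sum.inl x')
      (by rw [pl_univ E root hconn]; exact Finset.mem_univ _) rfl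
    rw [posV_inl, posV_inl, posV_inl, posV_inl] at h
    rw [Fin.lt_def, Fin.lt_def]
    exact h
  have hsm : StrictMono (fun j => fX (gX.symm j)) := by
    intro j j' hjj
    exact (horder (gX.symm j) (gX.symm j')).mpr (by simpa using hjj)
  have hid : (fun j => fX (gX.symm j)) = id := by
    apply (StrictMono.range_inj hsm strictMono_id).mp
    rw [Set.range_id]
    exact Function.Surjective.range_eq (fun j => ⟨gX (fX.symm j), by simp⟩)
  apply Equiv.coe_fn_injective
  funext x
  have := congrFun hid (gX x)
  simpa using this

end Charge

section Count

/-- prefix sums of `u j + 1`, as a natural number -/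
def Su {m : ℕ} (u : Fin m → ℕ) (k : ℕ) : ℕ :=
  ∑ j ∈ Finset.univ.filter (fun j : Fin m => j.val ≤ k), (u j + 1)

lemma Su_le {m t : ℕ} {u : Fin m → ℕ} (hu : ∑ j, u j ≤ t) (k : ℕ) :
    Su u k ≤ m + t := by
  have h1 : Su u k ≤ ∑ j : Fin m, (u j + 1) :=
    Finset.sum_le_sum_of_subset (Finset.filter_subset _ _)
  have h2 : ∑ j : Fin m, (u j + 1) = (∑ j, u j) + m := by
    rw [Finset.sum_add_distrib]
    simp
  omega

lemma Su_pos {m : ℕ} (u : Fin m → ℕ) (i : Fin m) : 1 ≤ Su u i.val := by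
  have : i ∈ Finset.univ.filter (fun j : Fin m => j.val ≤ i.val) := by
    simp
  calc 1 ≤ u i + 1 := by omega
    _ ≤ Su u i.val :=
      Finset.single_le_sum (f := fun j : Fin m => u j + 1) (fun _ _ => Nat.zero_le _) this

lemma Su_zero {m : ℕ} (u : Fin m → ℕ) (i : Fin m) (hi : i.val = 0) :
    Su u 0 = u i + 1 := by
  have : Finset.univ.filter (fun j : Fin m => j.val ≤ 0) = {i} := by
    ext j
    simp only [Finset.mem_filter, Finset.mem_univ, true_and, Finset.mem_singleton,
      Nat.le_zero]
    constructor
    · intro h; exact Fin.ext (h.trans hi.symm)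
    · intro h; rw [h, hi]
  rw [Su, this, Finset.sum_singleton]

lemma Su_succ {m : ℕ} (u : Fin m → ℕ) (k : ℕ) (hk : k < m) (hk1 : 1 ≤ k) :
    Su u k = Su u (k - 1) + (u ⟨k, hk⟩ + 1) := by
  have hsplit : Finset.univ.filter (fun j : Fin m => j.val ≤ k) =
      insert (⟨k, hk⟩ : Fin m) (Finset.univ.filter (fun j : Fin m => j.val ≤ k - 1)) := by
    ext j
    simp only [Finset.mem_filter, Finset.mem_univ, true_and, Finset.mem_insert]
    constructor
    · intro h
      by_cases hj : j.val = k
      · exact Or.inl (Fin.ext hj)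
      · exact Or.inr (by omega)
    · rintro (rfl | h)
      · exact le_rfl
      · omega
  have hnot : (⟨k, hk⟩ : Fin m) ∉
      Finset.univ.filter (fun j : Fin m => j.val ≤ k - 1) := by
    simp only [Finset.mem_filter, Finset.mem_univ, true_and]
    omega
  rw [Su, hsplit, Finset.sum_insert hnot, Su]
  omega

lemma Su_strictMono {m : ℕ} (u : Fin m → ℕ) {k k' : ℕ} (hk' : k' < m) (h : k < k') :
    Su u k < Su u k' := by
  have h1 : Su u k ≤ Su u (k' - 1) := by
    apply Finset.sum_le_sum_of_subset
    intro j hj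
    simp only [Finset.mem_filter, Finset.mem_univ, true_and] at *
    omega
  have h2 := Su_succ u k' hk' (by omega)
  omega

/-- encode a tuple with bounded sum as a finset via its prefix sums -/
def psum {m : ℕ} (t : ℕ) (u : Fin m → ℕ) : Finset (Fin (m + t)) :=
  Finset.univ.image (fun i : Fin m =>
    (⟨(Su u i.val - 1) % (m + t),
      Nat.mod_lt _ (by have := i.pos; omega)⟩ : Fin (m + t)))

lemma psum_inj {m t : ℕ} {u u' : Fin m → ℕ} (hu : ∑ j, u j ≤ t)
    (hu' : ∑ j, u' j ≤ t) (h : psum t u = psum t u') : u = u' := by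
  rw [psum, psum] at h
  have hmod : ∀ (w : Fin m → ℕ), (∑ j, w j ≤ t) → ∀ i : Fin m,
      (Su w i.val - 1) % (m + t) = Su w i.val - 1 := by
    intro w hw i
    apply Nat.mod_eq_of_lt
    have h1 := Su_le hw i.val
    have h2 := Su_pos w i
    have := i.pos
    omega
  set f : Fin m → Fin (m + t) := fun i =>
    (⟨(Su u i.val - 1) % (m + t), Nat.mod_lt _ (by have := i.pos; omega)⟩ : Fin (m + t))
    with hf
  set g : Fin m → Fin (m + t) := fun i =>
    (⟨(Su u' i.val - 1) % (m + t), Nat.mod_lt _ (by have := i.pos; omega)⟩ : Fin (m + t))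
    with hg
  have hfs : StrictMono f := by
    intro i i' hii
    rw [hf]
    simp only [Fin.mk_lt_mk]
    rw [hmod u hu i, hmod u hu i']
    have := Su_strictMono u i'.isLt (show i.val < i'.val from hii)
    have := Su_pos u i
    omega
  have hgs : StrictMono g := by
    intro i i' hii
    rw [hg]
    simp only [Fin.mk_lt_mk]
    rw [hmod u' hu' i, hmod u' hu' i']
    have := Su_strictMono u' i'.isLt (show i.val < i'.val from hii)
    have := Su_pos u' i
    omega
  have hrange : Set.range f = Set.range g := by
    have h1 : Set.range f = ↑(Finset.univ.image f) := by
      rw [Finset.coe_image, Finset.coe_univ, Set.image_univ]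
    have h2 : Set.range g = ↑(Finset.univ.image g) := by
      rw [Finset.coe_image, Finset.coe_univ, Set.image_univ]
    rw [h1, h2]
    exact congrArg _ h
  have hfg : f = g := (StrictMono.range_inj hfs hgs).mp hrange
  have hSu : ∀ i : Fin m, Su u i.val = Su u' i.val := by
    intro i
    have := congrFun hfg i
    rw [hf, hg] at this
    simp only [Fin.mk.injEq] at this
    rw [hmod u hu i, hmod u' hu' i] at this
    have := Su_pos u i
    have := Su_pos u' i
    omega
  funext i
  by_cases hi0 : i.val = 0
  · have h1 := Su_zero u i hi0
    have h2 := Su_zero u' i hi0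
    have h3 := hSu i
    rw [hi0] at h3
    omega
  · have hk1 : 1 ≤ i.val := by omega
    have h1 := Su_succ u i.val i.isLt hk1
    have h2 := Su_succ u' i.val i.isLt hk1
    have h3 := hSu i
    have h4 : Su u (i.val - 1) = Su u' (i.val - 1) := by
      have := hSu ⟨i.val - 1, by omega⟩
      exact this
    have h5 : (⟨i.val, i.isLt⟩ : Fin m) = i := Fin.ext rfl
    rw [h5] at h1 h2
    omega

end Count
end TLCM

/-- If `G` is connected, has no sibling pairs, and `|X|, |Y| ≥ 2`, then the number of
layouts `f_X` on `X` extendable to a two-layer drawing with at most `k` crossings is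
at most `n * 2 ^ (4k + 3n - 4)`, where `n = |X| + |Y|`. -/
theorem num_layouts_upper_bound (X Y : Type) [Fintype X] [Fintype Y]
    [DecidableEq X] [DecidableEq Y] (E : Finset (X × Y)) (k : ℕ)
    (hconn : (biGraph E).Connected) (hns : NoSiblingPairs E)
    (hX : 2 ≤ Fintype.card X) (hY : 2 ≤ Fintype.card Y) :
    Fintype.card {fX : X ≃ Fin (Fintype.card X) //
        ∃ fY : Y ≃ Fin (Fintype.card Y), crossNum E fX fY ≤ k}
      ≤ (Fintype.card X + Fintype.card Y) *
        2 ^ (4 * k + 3 * (Fintype.card X + Fintype.card Y) - 4) := by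
  classical
  have hNdef : TLCM.N (X := X) (Y := Y) = Fintype.card X + Fintype.card Y := rfl
  have hN4 : 4 ≤ TLCM.N (X := X) (Y := Y) := by omega
  have hx0 : 0 < Fintype.card X := by omega
  have hy0 : 0 < Fintype.card Y := by omega
  obtain ⟨x₀⟩ : Nonempty X := Fintype.card_pos_iff.mp hx0
  obtain ⟨y₀⟩ : Nonempty Y := Fintype.card_pos_iff.mp hy0
  have e₀ : (X × Y) × (X × Y) := ((x₀, y₀), (x₀, y₀))
  set nn := TLCM.N (X := X) (Y := Y) with hnn
  let Φ : {fX : X ≃ Fin (Fintype.card X) //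
      ∃ fY : Y ≃ Fin (Fintype.card Y), crossNum E fX fY ≤ k} →
      X × ((Fin (nn - 1) → Fin 4) × Finset (Fin ((nn - 2) + 4 * k))) := fun s =>
    (s.val.symm ⟨0, hx0⟩,
      (TLCM.flagsF E s.val (Classical.choose s.property) (s.val.symm ⟨0, hx0⟩),
        TLCM.psum (4 * k)
          (TLCM.ucodeF E s.val (Classical.choose s.property) (s.val.symm ⟨0, hx0⟩))))
  have hΦ : Function.Injective Φ := by
    rintro ⟨f1, hf1⟩ ⟨f2, hf2⟩ heq
    simp only [Φ, Prod.mk.injEq] at heq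
    obtain ⟨hr, hfl, hps⟩ := heq
    have hc1 : crossNum E f1 (Classical.choose hf1) ≤ k := Classical.choose_spec hf1
    have hc2 : crossNum E f2 (Classical.choose hf2) ≤ k := Classical.choose_spec hf2
    have hroot1 : (f1 (f1.symm ⟨0, hx0⟩) : ℕ) = 0 := by simp
    have hroot2 : (f2 (f1.symm ⟨0, hx0⟩) : ℕ) = 0 := by rw [hr]; simp
    rw [← hr] at hfl hps
    have hsum1 : ∑ j : Fin (nn - 2),
        TLCM.ucodeF E f1 (Classical.choose hf1) (f1.symm ⟨0, hx0⟩) j ≤ 4 * k :=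
      TLCM.sum_ucode_le E f1 (Classical.choose hf1) (f1.symm ⟨0, hx0⟩) hconn hns
        hroot1 e₀ (by omega) hc1
    have hsum2 : ∑ j : Fin (nn - 2),
        TLCM.ucodeF E f2 (Classical.choose hf2) (f1.symm ⟨0, hx0⟩) j ≤ 4 * k :=
      TLCM.sum_ucode_le E f2 (Classical.choose hf2) (f1.symm ⟨0, hx0⟩) hconn hns
        hroot2 e₀ (by omega) hc2
    have hueq := TLCM.psum_inj hsum1 hsum2 hps
    have hfeq : f1 = f2 :=
      TLCM.orders_eq E f1 (Classical.choose hf1) (f1.symm ⟨0, hx0⟩) hconn (by omega)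
        f2 (Classical.choose hf2) (fun j => congrFun hfl j) (fun j => congrFun hueq j)
    exact Subtype.ext hfeq
  have hcard := Fintype.card_le_of_injective Φ hΦ
  have hcardT : Fintype.card
      (X × ((Fin (nn - 1) → Fin 4) × Finset (Fin ((nn - 2) + 4 * k)))) =
      Fintype.card X * (4 ^ (nn - 1) * 2 ^ ((nn - 2) + 4 * k)) := by
    rw [Fintype.card_prod, Fintype.card_prod, Fintype.card_fun, Fintype.card_finset,
      Fintype.card_fin, Fintype.card_fin, Fintype.card_fin]
  rw [hcardT] at hcard
  have hpow : 4 ^ (nn - 1) * 2 ^ ((nn - 2) + 4 * k) =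
      2 ^ (4 * k + 3 * nn - 4) := by
    have h4 : (4 : ℕ) = 2 ^ 2 := rfl
    rw [h4, ← pow_mul, ← pow_add]
    congr 1
    omega
  rw [hpow] at hcard
  calc Fintype.card {fX : X ≃ Fin (Fintype.card X) //
        ∃ fY : Y ≃ Fin (Fintype.card Y), crossNum E fX fY ≤ k}
      ≤ Fintype.card X * 2 ^ (4 * k + 3 * nn - 4) := hcard
    _ ≤ (Fintype.card X + Fintype.card Y) * 2 ^ (4 * k + 3 * nn - 4) :=
        Nat.mul_le_mul_right _ (Nat.le_add_right _ _)
    _ = (Fintype.card X + Fintype.card Y) *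
        2 ^ (4 * k + 3 * (Fintype.card X + Fintype.card Y) - 4) := rfl
end

section
/- Let G be a connected bipartite graph with bipartition (X, Y), edge set E ⊆ X × Y, and |X| ≥ 2, and let r ∈ X. Then there exist a function T : X \ {r} → X and, for each x ∈ X \ {r}, a vertex y_x ∈ Y such that: (1) for each x ∈ X \ {r}, both (x, y_x) ∈ E and (T(x), y_x) ∈ E (so x and T(x) are joined by a path P_x of length two through y_x); (2) each edge e ∈ E satisfies |{x ∈ X \ {r} : e ∈ {(x, y_x), (T(x), y_x)}}| ≤ 2, i.e., each edge lies on at most two of the paths P_x; and (3) the graph with vertex set X and edge set {{x, T(x)} : x ∈ X \ {r}} is a tree. -/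
open Finset

variable {X Y : Type} [Fintype X] [Fintype Y] [DecidableEq X] [DecidableEq Y]

section Aux
open SimpleGraph

private lemma my_exists_adj_dist_pred {V : Type} {G : SimpleGraph V} (hconn : G.Connected)
    (r v : V) (hv : v ≠ r) :
    ∃ w, G.Adj v w ∧ G.dist r w + 1 = G.dist r v := by
  obtain ⟨pw, hpw⟩ := (hconn r v).exists_walk_length_eq_dist
  obtain ⟨w, hadj, q, hq⟩ := Walk.exists_eq_cons_of_ne hv pw.reverse
  have h1 : pw.length = q.length + 1 := by
    have := congrArg Walk.length hq
    simpa using this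
  have h2 : G.dist r w ≤ q.length := by
    simpa using dist_le q.reverse
  have h3 : G.dist r v ≤ G.dist r w + 1 := by
    have h4 : G.dist w v = 1 := dist_eq_one_iff_adj.mpr hadj.symm
    have h5 := hconn.dist_triangle (u := r) (v := w) (w := v)
    omega
  exact ⟨w, hadj, by omega⟩

private lemma my_isAcyclic {V : Type} {H : SimpleGraph V} (μ : V → ℕ)
    (h : ∀ v w₁ w₂, H.Adj v w₁ → H.Adj v w₂ → μ w₁ ≤ μ v → μ w₂ ≤ μ v → w₁ = w₂) :
    H.IsAcyclic := by
  classical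
  intro v c hc
  obtain ⟨m, hmS, hmax⟩ := Finset.exists_max_image c.support.toFinset μ
    ⟨v, by simp⟩
  rw [List.mem_toFinset] at hmS
  have hc' := hc.rotate hmS
  set c' := c.rotate m hmS with hc'def
  have hsub : ∀ z, z ∈ c'.support → z ∈ c.support := by
    intro z hz
    rw [Walk.mem_support_iff] at hz
    rcases hz with rfl | hz
    · exact hmS
    · exact List.mem_of_mem_tail ((Walk.support_rotate c m hmS).mem_iff.mp hz)
  obtain ⟨u, h1, q, hq⟩ := Walk.not_nil_iff.mp hc'.not_nil
  have hqnn : ¬ q.reverse.Nil := by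
    rw [Walk.not_nil_iff_lt_length, Walk.length_reverse]
    have h3 := hc'.three_le_length
    rw [hq] at h3
    simp only [Walk.length_cons] at h3
    omega
  obtain ⟨w, h2, q2, hq2⟩ := Walk.not_nil_iff.mp hqnn
  have hu : u ∈ c.support := hsub u (by rw [hq]; simp)
  have hwq : w ∈ q.support := by
    have : w ∈ q.reverse.support := by rw [hq2]; simp
    rwa [Walk.support_reverse, List.mem_reverse] at this
  have hw : w ∈ c.support := hsub w (by rw [hq, Walk.support_cons]; exact List.mem_cons_of_mem _ hwq)
  have huw : u = w := h m u w h1 h2 (hmax u (by simpa using hu)) (hmax w (by simpa using hw))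
  subst huw
  rw [hq, Walk.cons_isCycle_iff] at hc'
  apply hc'.2
  have : s(m, u) ∈ q.reverse.edges := by rw [hq2]; simp
  rwa [Walk.edges_reverse, List.mem_reverse] at this

end Aux

/-- In a connected bipartite graph with `|X| ≥ 2` and any root `r ∈ X`, there exist
`T : X \ {r} → X` and midpoints `y_x ∈ Y` such that each `x` is joined to `T x` by a
path `P_x` of length two through `y_x`, each edge lies on at most two of the paths
`P_x`, and the graph on `X` with edges `{x, T x}` is a tree. -/
theorem eulerian_tree_structure (X Y : Type) [Fintype X] [Fintype Y]
    [DecidableEq X] [DecidableEq Y] (E : Finset (X × Y))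
    (hconn : (biGraph E).Connected) (hX : 2 ≤ Fintype.card X) (r : X) :
    ∃ (T : {x : X // x ≠ r} → X) (yp : {x : X // x ≠ r} → Y),
      (∀ x : {x : X // x ≠ r}, (x.1, yp x) ∈ E ∧ (T x, yp x) ∈ E ∧ x.1 ≠ T x) ∧
      (∀ e ∈ E,
        (Finset.univ.filter fun x : {x : X // x ≠ r} =>
          e = (x.1, yp x) ∨ e = (T x, yp x)).card ≤ 2) ∧
      (SimpleGraph.fromRel fun a b =>
        ∃ x : {x : X // x ≠ r}, a = x.1 ∧ b = T x).IsTree := by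
  classical
  set G := biGraph E with hG
  set d : X ⊕ Y → ℕ := fun v => G.dist (Sum.inl r) v with hd
  -- parent choice for Y vertices
  have hgy : ∀ y : Y, ∃ x : X, (x, y) ∈ E ∧ d (Sum.inl x) + 1 = d (Sum.inr y) := by
    intro y
    obtain ⟨w, hadj, hdist⟩ := my_exists_adj_dist_pred hconn (Sum.inl r) (Sum.inr y) (by simp)
    cases w with
    | inl x => exact ⟨x, hadj, hdist⟩
    | inr y' => simp [hG, biGraph, biAdj] at hadj
  choose g hg1 hg2 using hgy
  -- parent choice for X vertices other than r
  have hpx : ∀ x : {x : X // x ≠ r}, ∃ y : Y,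
      (x.1, y) ∈ E ∧ d (Sum.inr y) + 1 = d (Sum.inl x.1) := by
    intro x
    obtain ⟨w, hadj, hdist⟩ := my_exists_adj_dist_pred hconn (Sum.inl r) (Sum.inl x.1)
      (by simp [x.2])
    cases w with
    | inr y => exact ⟨y, hadj, hdist⟩
    | inl x' => simp [hG, biGraph, biAdj] at hadj
  choose p hp1 hp2 using hpx
  -- a rank function on X
  set ρ : X → ℕ := fun a => ((Fintype.equivFin X) a : ℕ) with hρ
  have hρinj : ∀ a b : X, ρ a = ρ b → a = b := fun a b hab =>
    (Fintype.equivFin X).injective (Fin.ext hab)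
  have hρlt : ∀ a, ρ a < Fintype.card X := fun a => ((Fintype.equivFin X) a).2
  -- choose T
  have hTex : ∀ x : {x : X // x ≠ r}, ∃ t : X,
      (∃ x' : {x : X // x ≠ r}, t = x'.1 ∧ p x' = p x ∧ ρ x'.1 < ρ x.1 ∧
        ∀ x'' : {x : X // x ≠ r}, p x'' = p x → ρ x''.1 < ρ x.1 → ρ x''.1 ≤ ρ x'.1) ∨
      (t = g (p x) ∧ ∀ x'' : {x : X // x ≠ r}, p x'' = p x → ¬ ρ x''.1 < ρ x.1) := by
    intro x
    by_cases hS : (Finset.univ.filter fun x' : {x : X // x ≠ r} =>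
        p x' = p x ∧ ρ x'.1 < ρ x.1).Nonempty
    · obtain ⟨x', hx'mem, hx'max⟩ := Finset.exists_max_image _ (fun x' => ρ x'.1) hS
      simp only [Finset.mem_filter, Finset.mem_univ, true_and] at hx'mem
      refine ⟨x'.1, Or.inl ⟨x', rfl, hx'mem.1, hx'mem.2, ?_⟩⟩
      intro x'' h1 h2
      exact hx'max x'' (by simp [Finset.mem_filter, h1, h2])
    · refine ⟨g (p x), Or.inr ⟨rfl, ?_⟩⟩
      intro x'' h1 h2
      exact hS ⟨x'', by simp [Finset.mem_filter, h1, h2]⟩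
  choose T hT using hTex
  set μ : X → ℕ := fun a => d (Sum.inl a) * Fintype.card X + ρ a with hμ
  have hdpos : ∀ y : Y, 1 ≤ d (Sum.inr y) := by
    intro y
    have h0 : d (Sum.inr y) ≠ 0 := by
      simp only [hd]
      rw [Ne, hconn.dist_eq_zero_iff]
      simp
    omega
  -- edge membership for T
  have hTE : ∀ x, (T x, p x) ∈ E := by
    intro x
    rcases hT x with ⟨x', ht, hpe, -, -⟩ | ⟨ht, -⟩
    · rw [ht, ← hpe]; exact hp1 x'
    · rw [ht]; exact hg1 (p x)
  -- μ decreases along T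
  have hTμ : ∀ x, μ (T x) < μ x.1 := by
    intro x
    rcases hT x with ⟨x', ht, hpe, hlt, -⟩ | ⟨ht, -⟩
    · have hdeq : d (Sum.inl (T x)) = d (Sum.inl x.1) := by
        rw [ht, ← hp2 x', ← hp2 x, hpe]
      simp only [hμ]
      rw [hdeq, ht]
      have := hlt
      omega
    · have h1 : d (Sum.inl (T x)) + 1 = d (Sum.inr (p x)) := by rw [ht]; exact hg2 (p x)
      have h2 := hp2 x
      have h3 : d (Sum.inl x.1) = d (Sum.inl (T x)) + 2 := by omega
      have h4 : d (Sum.inl x.1) * Fintype.card X =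
          d (Sum.inl (T x)) * Fintype.card X + 2 * Fintype.card X := by rw [h3]; ring
      have h5 := hρlt (T x)
      have h6 := hρlt x.1
      simp only [hμ]
      omega
  have hTne : ∀ x, x.1 ≠ T x := by
    intro x h
    have := hTμ x
    rw [← h] at this
    omega
  -- injectivity of (T, p)
  have hTinj : ∀ x x' : {x : X // x ≠ r}, p x = p x' → T x = T x' → x = x' := by
    intro x x' hpe hTe
    rcases hT x with ⟨a, ha1, ha2, ha3, ha4⟩ | ⟨ha1, ha2⟩ <;>
      rcases hT x' with ⟨b, hb1, hb2, hb3, hb4⟩ | ⟨hb1, hb2⟩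
    · -- both max-below
      have hab : a = b := Subtype.ext (by rw [← ha1, ← hb1, hTe])
      rcases lt_trichotomy (ρ x.1) (ρ x'.1) with h | h | h
      · have := hb4 x hpe h
        rw [← hab] at this
        omega
      · exact Subtype.ext (hρinj _ _ h)
      · have := ha4 x' hpe.symm h
        rw [hab] at this
        omega
    · -- mixed: contradiction on distances
      exfalso
      have hda : d (Sum.inl (T x)) = d (Sum.inr (p x)) + 1 := by
        rw [ha1, ← hp2 a, ha2]
      have hdb : d (Sum.inl (T x')) + 1 = d (Sum.inr (p x')) := by
        rw [hb1]; exact hg2 (p x')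
      rw [← hTe, ← hpe] at hdb
      omega
    · exfalso
      have hda : d (Sum.inl (T x)) + 1 = d (Sum.inr (p x)) := by
        rw [ha1]; exact hg2 (p x)
      have hdb : d (Sum.inl (T x')) = d (Sum.inr (p x')) + 1 := by
        rw [hb1, ← hp2 b, hb2]
      rw [← hTe, ← hpe] at hdb
      omega
    · rcases lt_trichotomy (ρ x.1) (ρ x'.1) with h | h | h
      · exact absurd h (hb2 x hpe)
      · exact Subtype.ext (hρinj _ _ h)
      · exact absurd h (ha2 x' hpe.symm)
  refine ⟨T, p, fun x => ⟨hp1 x, hTE x, hTne x⟩, ?_, ?_⟩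
  · -- each edge on at most two paths
    intro e he
    rw [Finset.filter_or]
    refine le_trans (Finset.card_union_le _ _) ?_
    have c1 : (Finset.univ.filter fun x : {x : X // x ≠ r} => e = (x.1, p x)).card ≤ 1 := by
      apply Finset.card_le_one.mpr
      intro a ha b hb
      simp only [Finset.mem_filter, Finset.mem_univ, true_and] at ha hb
      rw [ha] at hb
      exact Subtype.ext (congrArg Prod.fst hb)
    have c2 : (Finset.univ.filter fun x : {x : X // x ≠ r} => e = (T x, p x)).card ≤ 1 := by
      apply Finset.card_le_one.mpr
      intro a ha b hb
      simp only [Finset.mem_filter, Finset.mem_univ, true_and] at ha hb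
      rw [ha] at hb
      exact (hTinj a b (congrArg Prod.snd hb) (congrArg Prod.fst hb)).symm ▸ rfl
    omega
  · -- tree
    set H := SimpleGraph.fromRel fun a b =>
      ∃ x : {x : X // x ≠ r}, a = x.1 ∧ b = T x with hH
    have hadjH : ∀ x : {x : X // x ≠ r}, H.Adj x.1 (T x) := by
      intro x
      rw [hH, SimpleGraph.fromRel_adj]
      exact ⟨hTne x, Or.inl ⟨x, rfl, rfl⟩⟩
    have hreach : ∀ n, ∀ a : X, μ a ≤ n → H.Reachable a r := by
      intro n
      induction n with
      | zero =>
        intro a ha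
        by_cases h : a = r
        · subst h; exact SimpleGraph.Reachable.refl _
        · have h1 : μ (T ⟨a, h⟩) < μ a := hTμ ⟨a, h⟩
          omega
      | succ n ih =>
        intro a ha
        by_cases h : a = r
        · subst h; exact SimpleGraph.Reachable.refl _
        · have h1 : μ (T ⟨a, h⟩) < μ a := hTμ ⟨a, h⟩
          exact (hadjH ⟨a, h⟩).reachable.trans (ih (T ⟨a, h⟩) (by omega))
    have hne : Nonempty X := Fintype.card_pos_iff.mp (by omega)
    have hconnH : H.Connected := by
      rw [SimpleGraph.connected_iff]
      exact ⟨fun a b => (hreach (μ a) a le_rfl).trans (hreach (μ b) b le_rfl).symm, hne⟩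
    refine ⟨hconnH, my_isAcyclic μ ?_⟩
    intro v w₁ w₂ h1 h2 hle1 hle2
    have key : ∀ w, H.Adj v w → μ w ≤ μ v → ∃ x : {x : X // x ≠ r}, x.1 = v ∧ w = T x := by
      intro w hw hle
      rw [hH, SimpleGraph.fromRel_adj] at hw
      obtain ⟨hne', hrel | hrel⟩ := hw
      · obtain ⟨x, hx1, hx2⟩ := hrel
        exact ⟨x, hx1.symm, hx2⟩
      · obtain ⟨x, hx1, hx2⟩ := hrel
        have := hTμ x
        rw [← hx1, ← hx2] at this
        omega
    obtain ⟨x1, hx11, hx12⟩ := key w₁ h1 hle1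
    obtain ⟨x2, hx21, hx22⟩ := key w₂ h2 hle2
    have : x1 = x2 := Subtype.ext (hx11.trans hx21.symm)
    rw [hx12, hx22, this]
end

section
/- For every bipartite graph G with bipartition (X, Y), there exists a two-layer drawing D of G whose crossing number equals the bipartite crossing number bcr(G) and in which, for every non-leaf vertex v, all the leaves adjacent to v occupy consecutive positions in their layer (i.e., the images under the layout of the leaves adjacent to v form a set of consecutive integers). -/
open Finset

variable {X Y : Type} [Fintype X] [Fintype Y] [DecidableEq X] [DecidableEq Y]

/-- A set of naturals is a set of consecutive integers. -/
def IsConsecutive (s : Set ℕ) : Prop :=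
  ∀ a b c : ℕ, a ∈ s → c ∈ s → a ≤ b → b ≤ c → b ∈ s

section AuxLeaves

set_option linter.unusedSectionVars false

section Core

variable {V W : Type} [Fintype V] [Fintype W] [DecidableEq V] [DecidableEq W]

/-- `w` has exactly one incident edge. -/
def Wleaf (E : Finset (V × W)) (w : W) : Prop := (E.filter fun e => e.2 = w).card = 1

instance (E : Finset (V × W)) (w : W) : Decidable (Wleaf E w) := by unfold Wleaf; infer_instance

/-- leaves adjacent to `v`. -/
def Lfin (E : Finset (V × W)) (v : V) : Finset W :=
  univ.filter fun w => (v, w) ∈ E ∧ Wleaf E w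

/-- abstract crossing count. -/
def CN (E : Finset (V × W)) (pV : V → ℕ) (g : W → ℕ) : ℕ :=
  ((E ×ˢ E).filter fun p => pV p.1.1 < pV p.2.1 ∧ g p.2.2 < g p.1.2).card

lemma uniq_nb {E : Finset (V × W)} {v w} (h : w ∈ Lfin E v) {v'} (h' : (v', w) ∈ E) :
    v' = v := by
  simp only [Lfin, mem_filter, mem_univ, true_and] at h
  obtain ⟨hvE, hleaf⟩ := h
  have h1 : (v, w) ∈ E.filter fun e => e.2 = w := by simp [hvE]
  have h2 : (v', w) ∈ E.filter fun e => e.2 = w := by simp [h']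
  have := Finset.card_le_one.mp (le_of_eq hleaf) _ h2 _ h1
  exact (Prod.ext_iff.mp this).1

def ConsecKey (g : W → ℕ) (S : Finset W) : Prop :=
  ∀ w1 w2 w3, w1 ∈ S → w3 ∈ S → g w1 ≤ g w2 → g w2 ≤ g w3 → w2 ∈ S

section arith
variable {M a b c d : ℕ}

lemma cmpC' : (M+1) * a < (M+1) * c ↔ a < c :=
  Nat.mul_lt_mul_left (by omega)

lemma cmpA (hb : b ≤ M) (hne : c ≠ a) : (M+1) * c < (M+1) * a + b ↔ c < a := by
  rcases lt_trichotomy c a with h | h | h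
  · simp only [h, iff_true]
    calc (M+1) * c < (M+1) * c + (M+1) := by omega
    _ = (M+1) * (c+1) := by ring
    _ ≤ (M+1) * a := Nat.mul_le_mul_left _ (by omega)
    _ ≤ (M+1) * a + b := by omega
  · exact absurd h hne
  · have : (M+1) * a + b < (M+1) * c := by
      calc (M+1) * a + b < (M+1) * a + (M+1) := by omega
      _ = (M+1) * (a+1) := by ring
      _ ≤ (M+1) * c := Nat.mul_le_mul_left _ (by omega)
    constructor
    · intro h'; omega
    · intro h'; omega

lemma cmpB (hb : b ≤ M) (hne : c ≠ a) : (M+1) * a + b < (M+1) * c ↔ a < c := by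
  rcases lt_trichotomy a c with h | h | h
  · simp only [h, iff_true]
    calc (M+1) * a + b < (M+1) * a + (M+1) := by omega
    _ = (M+1) * (a+1) := by ring
    _ ≤ (M+1) * c := Nat.mul_le_mul_left _ (by omega)
  · exact absurd h.symm hne
  · have : (M+1) * c < (M+1) * a := cmpC'.mpr h
    constructor
    · intro h'; omega
    · intro h'; omega

lemma cmpC : (M+1) * a < (M+1) * c ↔ a < c := cmpC'


end arith

end Core

section Core2

variable {V W : Type} [Fintype V] [Fintype W] [DecidableEq V] [DecidableEq W]

lemma step_lemma (E : Finset (V × W)) (pV : V → ℕ) (g : W → ℕ)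
    (hg : Function.Injective g) (v : V) :
    ∃ g' : W → ℕ, Function.Injective g' ∧ CN E pV g' ≤ CN E pV g ∧
      ConsecKey g' (Lfin E v) ∧
      ∀ v' : V, ConsecKey g (Lfin E v') → ConsecKey g' (Lfin E v') := by
  classical
  set L := Lfin E v with hLdef
  by_cases hLne : L.Nonempty
  swap
  · refine ⟨g, hg, le_refl _, ?_, fun v' h => h⟩
    intro w1 w2 w3 h1 _ _ _
    exact absurd ⟨w1, h1⟩ hLne
  -- the cost of placing a leaf edge of `v` at key value `t`
  set En : Finset (V × W) := E.filter (fun e => ¬ e.2 ∈ L) with hEn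
  set EL : Finset (V × W) := E.filter (fun e => e.2 ∈ L) with hEL
  obtain ⟨ws, hws, hmin⟩ := Finset.exists_min_image L (fun w =>
    (∑ e2 ∈ En, (if pV v < pV e2.1 ∧ g e2.2 < g w then 1 else 0)) +
    (∑ e1 ∈ En, (if pV e1.1 < pV v ∧ g w < g e1.2 then 1 else 0))) hLne
  set M : ℕ := univ.sup g with hMdef
  have hM : ∀ w, g w ≤ M := fun w => Finset.le_sup (mem_univ w)
  set g' : W → ℕ := fun w => if w ∈ L then (M+1) * g ws + g w else (M+1) * g w with hg'
  have hgne : ∀ w', w' ∉ L → g w' ≠ g ws := by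
    intro w' hw' heq
    exact hw' (hg heq ▸ hws)
  have hc1 : ∀ w w', w ∈ L → w' ∉ L → (g' w' < g' w ↔ g w' < g ws) := by
    intro w w' hw hw'
    simp only [hg', if_pos hw, if_neg hw']
    exact cmpA (hM w) (hgne w' hw')
  have hc2 : ∀ w w', w ∈ L → w' ∉ L → (g' w < g' w' ↔ g ws < g w') := by
    intro w w' hw hw'
    simp only [hg', if_pos hw, if_neg hw']
    exact cmpB (hM w) (hgne w' hw')
  have hc3 : ∀ w w', w ∉ L → w' ∉ L → (g' w < g' w' ↔ g w < g w') := by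
    intro w w' hw hw'
    simp only [hg', if_neg hw, if_neg hw']
    exact cmpC
  have hinj : Function.Injective g' := by
    intro w w' heq
    by_cases hw : w ∈ L <;> by_cases hw' : w' ∈ L
    · simp only [hg', if_pos hw, if_pos hw'] at heq
      exact hg (by omega)
    · have e1 : ¬ g' w' < g' w := by rw [heq]; exact lt_irrefl _
      have e2 : ¬ g' w < g' w' := by rw [heq]; exact lt_irrefl _
      rw [hc1 w w' hw hw'] at e1
      rw [hc2 w w' hw hw'] at e2
      exact absurd (hg (by omega : g w' = g ws)) (fun h => hw' (h ▸ hws))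
    · have e1 : ¬ g' w < g' w' := by rw [heq]; exact lt_irrefl _
      have e2 : ¬ g' w' < g' w := by rw [heq]; exact lt_irrefl _
      rw [hc1 w' w hw' hw] at e1
      rw [hc2 w' w hw' hw] at e2
      exact absurd (hg (by omega : g w = g ws)) (fun h => hw (h ▸ hws))
    · simp only [hg', if_neg hw, if_neg hw'] at heq
      exact hg (Nat.eq_of_mul_eq_mul_left (Nat.succ_pos M) heq)
  have hconsec : ConsecKey g' L := by
    intro w1 w2 w3 h1 h3 h12 h23
    by_cases h2 : w2 ∈ L
    · exact h2
    exfalso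
    have e1 : ¬ g' w2 < g' w1 := not_lt.mpr h12
    have e2 : ¬ g' w3 < g' w2 := not_lt.mpr h23
    rw [hc1 w1 w2 h1 h2] at e1
    rw [hc2 w3 w2 h3 h2] at e2
    exact h2 (hg (by omega : g w2 = g ws) ▸ hws)
  refine ⟨g', hinj, ?_, hconsec, ?_⟩
  · -- crossing count does not increase
    have outer : ∀ (f : V × W → ℕ), ∑ e ∈ E, f e = ∑ e ∈ EL, f e + ∑ e ∈ En, f e := by
      intro f
      rw [hEL, hEn]
      exact (Finset.sum_filter_add_sum_filter_not E _ f).symm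
    have hsplit : ∀ h : W → ℕ, CN E pV h =
        ((∑ e1 ∈ EL, ∑ e2 ∈ EL, (if pV e1.1 < pV e2.1 ∧ h e2.2 < h e1.2 then 1 else 0)) +
         (∑ e1 ∈ EL, ∑ e2 ∈ En, (if pV e1.1 < pV e2.1 ∧ h e2.2 < h e1.2 then 1 else 0))) +
        ((∑ e1 ∈ En, ∑ e2 ∈ EL, (if pV e1.1 < pV e2.1 ∧ h e2.2 < h e1.2 then 1 else 0)) +
         (∑ e1 ∈ En, ∑ e2 ∈ En, (if pV e1.1 < pV e2.1 ∧ h e2.2 < h e1.2 then 1 else 0))) := by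
      intro h
      rw [CN, Finset.card_filter, Finset.sum_product, outer]
      congr 1
      · rw [← Finset.sum_add_distrib]
        exact Finset.sum_congr rfl fun e1 _ => outer _
      · rw [← Finset.sum_add_distrib]
        exact Finset.sum_congr rfl fun e1 _ => outer _
    have hEL1 : ∀ e ∈ EL, e.1 = v := by
      intro e he
      rw [hEL, mem_filter] at he
      exact uniq_nb he.2 (by rw [Prod.mk.eta]; exact he.1)
    have hELL : ∀ e ∈ EL, e.2 ∈ L := by
      intro e he; rw [hEL, mem_filter] at he; exact he.2
    have hEnL : ∀ e ∈ En, e.2 ∉ L := by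
      intro e he; rw [hEn, mem_filter] at he; exact he.2
    have hT1 : ∀ h : W → ℕ,
        (∑ e1 ∈ EL, ∑ e2 ∈ EL, (if pV e1.1 < pV e2.1 ∧ h e2.2 < h e1.2 then 1 else 0)) = 0 := by
      intro h
      refine Finset.sum_eq_zero fun e1 h1 => Finset.sum_eq_zero fun e2 h2 => ?_
      rw [hEL1 e1 h1, hEL1 e2 h2, if_neg]
      exact fun hcon => lt_irrefl _ hcon.1
    have hT2' : (∑ e1 ∈ EL, ∑ e2 ∈ En, (if pV e1.1 < pV e2.1 ∧ g' e2.2 < g' e1.2 then 1 else 0))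
        = ∑ e1 ∈ EL, ∑ e2 ∈ En, (if pV v < pV e2.1 ∧ g e2.2 < g ws then 1 else 0) := by
      refine Finset.sum_congr rfl fun e1 h1 => Finset.sum_congr rfl fun e2 h2 => ?_
      rw [hEL1 e1 h1]
      simp only [hc1 e1.2 e2.2 (hELL e1 h1) (hEnL e2 h2)]
    have hT2 : (∑ e1 ∈ EL, ∑ e2 ∈ En, (if pV e1.1 < pV e2.1 ∧ g e2.2 < g e1.2 then 1 else 0))
        = ∑ e1 ∈ EL, ∑ e2 ∈ En, (if pV v < pV e2.1 ∧ g e2.2 < g e1.2 then 1 else 0) := by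
      refine Finset.sum_congr rfl fun e1 h1 => Finset.sum_congr rfl fun e2 h2 => ?_
      rw [hEL1 e1 h1]
    have hT3' : (∑ e1 ∈ En, ∑ e2 ∈ EL, (if pV e1.1 < pV e2.1 ∧ g' e2.2 < g' e1.2 then 1 else 0))
        = ∑ e2 ∈ EL, ∑ e1 ∈ En, (if pV e1.1 < pV v ∧ g ws < g e1.2 then 1 else 0) := by
      rw [Finset.sum_comm]
      refine Finset.sum_congr rfl fun e2 h2 => Finset.sum_congr rfl fun e1 h1 => ?_
      rw [hEL1 e2 h2]
      simp only [hc2 e2.2 e1.2 (hELL e2 h2) (hEnL e1 h1)]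
    have hT3 : (∑ e1 ∈ En, ∑ e2 ∈ EL, (if pV e1.1 < pV e2.1 ∧ g e2.2 < g e1.2 then 1 else 0))
        = ∑ e2 ∈ EL, ∑ e1 ∈ En, (if pV e1.1 < pV v ∧ g e2.2 < g e1.2 then 1 else 0) := by
      rw [Finset.sum_comm]
      refine Finset.sum_congr rfl fun e2 h2 => Finset.sum_congr rfl fun e1 h1 => ?_
      rw [hEL1 e2 h2]
    have hT4 : (∑ e1 ∈ En, ∑ e2 ∈ En, (if pV e1.1 < pV e2.1 ∧ g' e2.2 < g' e1.2 then 1 else 0))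
        = ∑ e1 ∈ En, ∑ e2 ∈ En, (if pV e1.1 < pV e2.1 ∧ g e2.2 < g e1.2 then 1 else 0) := by
      refine Finset.sum_congr rfl fun e1 h1 => Finset.sum_congr rfl fun e2 h2 => ?_
      simp only [hc3 e2.2 e1.2 (hEnL e2 h2) (hEnL e1 h1)]
    have hmin' : ∀ e ∈ EL,
        (∑ e2 ∈ En, (if pV v < pV e2.1 ∧ g e2.2 < g ws then 1 else 0)) +
        (∑ e1 ∈ En, (if pV e1.1 < pV v ∧ g ws < g e1.2 then 1 else 0)) ≤
        (∑ e2 ∈ En, (if pV v < pV e2.1 ∧ g e2.2 < g e.2 then 1 else 0)) +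
        (∑ e1 ∈ En, (if pV e1.1 < pV v ∧ g e.2 < g e1.2 then 1 else 0)) :=
      fun e he => hmin e.2 (hELL e he)
    have hsum := Finset.sum_le_sum hmin'
    rw [Finset.sum_add_distrib, Finset.sum_add_distrib] at hsum
    rw [hsplit g', hsplit g, hT1 g', hT1 g, hT2', hT2, hT3', hT3, hT4]
    omega
  · -- preservation
    intro v' hC
    by_cases hvv : v' = v
    · subst hvv; exact hconsec
    have hdisj : ∀ w, w ∈ Lfin E v' → w ∉ L := by
      intro w hw' hwL
      have hE' : (v', w) ∈ E := by
        simp only [Lfin, mem_filter, mem_univ, true_and] at hw'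
        exact hw'.1
      exact hvv (uniq_nb hwL hE')
    intro w1 w2 w3 h1 h3 h12 h23
    have h1' := hdisj w1 h1
    have h3' := hdisj w3 h3
    by_cases h2 : w2 ∈ L
    · exfalso
      have e1 : ¬ g' w2 < g' w1 := not_lt.mpr h12
      have e2 : ¬ g' w3 < g' w2 := not_lt.mpr h23
      rw [hc2 w2 w1 h2 h1'] at e1
      rw [hc1 w2 w3 h2 h3'] at e2
      exact hdisj ws (hC w1 ws w3 h1 h3 (not_lt.mp e1) (not_lt.mp e2)) hws
    · have e1 : ¬ g' w2 < g' w1 := not_lt.mpr h12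
      have e2 : ¬ g' w3 < g' w2 := not_lt.mpr h23
      rw [hc3 w2 w1 h2 h1'] at e1
      rw [hc3 w3 w2 h3' h2] at e2
      exact hC w1 w2 w3 h1 h3 (not_lt.mp e1) (not_lt.mp e2)

end Core2

section Core3

variable {V W : Type} [Fintype V] [Fintype W] [DecidableEq V] [DecidableEq W]

lemma fold_lemma (E : Finset (V × W)) (pV : V → ℕ) (g0 : W → ℕ)
    (hg0 : Function.Injective g0) :
    ∃ g : W → ℕ, Function.Injective g ∧ CN E pV g ≤ CN E pV g0 ∧
      ∀ v : V, ConsecKey g (Lfin E v) := by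
  classical
  suffices h : ∀ s : Finset V, ∃ g : W → ℕ, Function.Injective g ∧ CN E pV g ≤ CN E pV g0 ∧
      ∀ v ∈ s, ConsecKey g (Lfin E v) by
    obtain ⟨g, h1, h2, h3⟩ := h univ
    exact ⟨g, h1, h2, fun v => h3 v (mem_univ v)⟩
  intro s
  induction s using Finset.induction_on with
  | empty => exact ⟨g0, hg0, le_refl _, by simp⟩
  | @insert a s hx ih =>
      obtain ⟨g, h1, h2, h3⟩ := ih
      obtain ⟨g', h1', h2', h3', h4'⟩ := step_lemma E pV g h1 a
      refine ⟨g', h1', le_trans h2' h2, ?_⟩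
      intro v hv
      rcases mem_insert.mp hv with h | h
      · exact h ▸ h3'
      · exact h4' v (h3 v h)

lemma realize (g : W → ℕ) (hg : Function.Injective g) :
    ∃ fW : W ≃ Fin (Fintype.card W), ∀ w w', (fW w < fW w' ↔ g w < g w') := by
  classical
  have hcard : (univ.image g).card = Fintype.card W := by
    rw [Finset.card_image_of_injective _ hg, card_univ]
  let oi := (univ.image g).orderIsoOfFin hcard
  have hinj : Function.Injective (fun w => (⟨g w, mem_image_of_mem g (mem_univ w)⟩ :
      {x // x ∈ univ.image g})) := by
    intro w w' h
    exact hg (congrArg Subtype.val h)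
  have hsurj : Function.Surjective (fun w => (⟨g w, mem_image_of_mem g (mem_univ w)⟩ :
      {x // x ∈ univ.image g})) := by
    rintro ⟨a, ha⟩
    obtain ⟨w, _, hw⟩ := mem_image.mp ha
    exact ⟨w, Subtype.ext hw⟩
  let e1 : W ≃ {x // x ∈ univ.image g} := Equiv.ofBijective _ ⟨hinj, hsurj⟩
  refine ⟨e1.trans oi.symm.toEquiv, fun w w' => ?_⟩
  have : ∀ u : W, (e1.trans oi.symm.toEquiv) u = oi.symm ⟨g u, mem_image_of_mem g (mem_univ u)⟩ :=
    fun u => rfl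
  rw [this w, this w', oi.symm.lt_iff_lt]
  exact Subtype.mk_lt_mk

theorem core_thm (E : Finset (V × W)) (pV : V → ℕ) (g0 : W → ℕ)
    (hg0 : Function.Injective g0) :
    ∃ fW : W ≃ Fin (Fintype.card W),
      CN E pV (fun w => (fW w : ℕ)) ≤ CN E pV g0 ∧
      ∀ v : V, IsConsecutive {n : ℕ | ∃ w, (v, w) ∈ E ∧ Wleaf E w ∧ (fW w : ℕ) = n} := by
  classical
  obtain ⟨g, hinj, hle, hcons⟩ := fold_lemma E pV g0 hg0
  obtain ⟨fW, hfW⟩ := realize g hinj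
  have hiff : ∀ w w' : W, ((fW w : ℕ) < (fW w' : ℕ) ↔ g w < g w') := by
    intro w w'
    rw [← Fin.lt_def]
    exact hfW w w'
  refine ⟨fW, ?_, ?_⟩
  · have heq : CN E pV (fun w => (fW w : ℕ)) = CN E pV g := by
      unfold CN
      congr 1
      apply Finset.filter_congr
      intro p _
      simp only [hiff]
    rw [heq]; exact hle
  · intro v a b c ha hc hab hbc
    obtain ⟨w1, hw1E, hw1l, hw1⟩ := ha
    obtain ⟨w3, hw3E, hw3l, hw3⟩ := hc
    have hbn : b < Fintype.card W := lt_of_le_of_lt hbc (hw3 ▸ (fW w3).isLt)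
    set w2 := fW.symm ⟨b, hbn⟩ with hw2def
    have hw2 : (fW w2 : ℕ) = b := by rw [hw2def, Equiv.apply_symm_apply]
    have h12 : g w1 ≤ g w2 := by
      by_contra h
      push_neg at h
      have := (hiff w2 w1).mpr h
      omega
    have h23 : g w2 ≤ g w3 := by
      by_contra h
      push_neg at h
      have := (hiff w3 w2).mpr h
      omega
    have hmem : w2 ∈ Lfin E v := by
      refine hcons v w1 w2 w3 ?_ ?_ h12 h23 <;>
        simp only [Lfin, mem_filter, mem_univ, true_and]
      · exact ⟨hw1E, hw1l⟩
      · exact ⟨hw3E, hw3l⟩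
    simp only [Lfin, mem_filter, mem_univ, true_and] at hmem
    exact ⟨w2, hmem.1, hmem.2, hw2⟩

end Core3

-- bridge lemmas
lemma degree_inr (E : Finset (X × Y)) (y : Y) :
    (biGraph E).degree (Sum.inr y) = (E.filter fun e => e.2 = y).card := by
  classical
  have himg : (biGraph E).neighborFinset (Sum.inr y)
      = (E.filter fun e => e.2 = y).image (fun e => Sum.inl e.1) := by
    ext u
    rw [SimpleGraph.mem_neighborFinset]
    cases u with
    | inl x =>
        simp only [mem_image, mem_filter]
        constructor
        · intro h
          exact ⟨(x, y), ⟨h, rfl⟩, rfl⟩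
        · rintro ⟨e, ⟨heE, hey⟩, heq⟩
          have : e = (x, y) := by
            cases e; simp_all
          rwa [this] at heE
    | inr y' => simp [biGraph, biAdj]
  rw [← SimpleGraph.card_neighborFinset_eq_degree, himg]
  apply Finset.card_image_of_injOn
  intro e he e' he' h
  rw [mem_coe, mem_filter] at he he'
  have h1 : e.1 = e'.1 := by injection h
  exact Prod.ext h1 (he.2.trans he'.2.symm)

lemma degree_inl (E : Finset (X × Y)) (x : X) :
    (biGraph E).degree (Sum.inl x) = (E.filter fun e => e.1 = x).card := by
  classical
  have himg : (biGraph E).neighborFinset (Sum.inl x)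
      = (E.filter fun e => e.1 = x).image (fun e => Sum.inr e.2) := by
    ext u
    rw [SimpleGraph.mem_neighborFinset]
    cases u with
    | inr y =>
        simp only [mem_image, mem_filter]
        constructor
        · intro h
          exact ⟨(x, y), ⟨h, rfl⟩, rfl⟩
        · rintro ⟨e, ⟨heE, hex⟩, heq⟩
          have : e = (x, y) := by
            cases e; simp_all
          rwa [this] at heE
    | inl x' => simp [biGraph, biAdj]
  rw [← SimpleGraph.card_neighborFinset_eq_degree, himg]
  apply Finset.card_image_of_injOn
  intro e he e' he' h
  rw [mem_coe, mem_filter] at he he'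
  have h2 : e.2 = e'.2 := by injection h
  exact Prod.ext (he.2.trans he'.2.symm) h2

lemma isleaf_inr_iff (E : Finset (X × Y)) (y : Y) :
    IsLeaf E (Sum.inr y) ↔ Wleaf E y := by
  rw [IsLeaf, degree_inr, Wleaf]

lemma mem_swap_iff' (E : Finset (X × Y)) (q : Y × X) :
    q ∈ E.image Prod.swap ↔ q.swap ∈ E := by
  constructor
  · intro h
    obtain ⟨e, he, heq⟩ := Finset.mem_image.mp h
    rw [← heq, Prod.swap_swap]
    exact he
  · intro h
    have := Finset.mem_image_of_mem Prod.swap h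
    rwa [Prod.swap_swap] at this

lemma swap_filter (E : Finset (X × Y)) (x : X) :
    (E.image Prod.swap).filter (fun e => e.2 = x) =
      (E.filter fun e => e.1 = x).image Prod.swap := by
  ext q
  obtain ⟨b, a⟩ := q
  constructor
  · intro h
    rw [mem_filter, mem_swap_iff'] at h
    exact mem_image_of_mem _ (mem_filter.mpr ⟨h.1, h.2⟩)
  · intro h
    obtain ⟨e, he, heq⟩ := mem_image.mp h
    rw [mem_filter] at he
    rw [mem_filter, ← heq, mem_swap_iff', Prod.swap_swap]
    exact ⟨he.1, by cases e; simp_all⟩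

lemma isleaf_inl_iff (E : Finset (X × Y)) (x : X) :
    IsLeaf E (Sum.inl x) ↔ Wleaf (E.image Prod.swap) x := by
  rw [IsLeaf, degree_inl, Wleaf, swap_filter,
    Finset.card_image_of_injective _ Prod.swap_injective]


lemma CN_swap (E : Finset (X × Y)) (a : Y → ℕ) (b : X → ℕ) :
    CN (E.image Prod.swap) a b = CN E b a := by
  classical
  unfold CN
  apply Finset.card_nbij' (i := fun p => ((p.2.swap, p.1.swap) : (X × Y) × (X × Y)))
    (j := fun q => ((q.2.swap, q.1.swap) : (Y × X) × (Y × X)))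
  · intro p hp
    rw [mem_coe, mem_filter, mem_product] at hp ⊢
    obtain ⟨⟨hp1, hp2⟩, hc1, hc2⟩ := hp
    rw [mem_swap_iff'] at hp1 hp2
    exact ⟨⟨hp2, hp1⟩, by simpa using hc2, by simpa using hc1⟩
  · intro q hq
    rw [mem_coe, mem_filter, mem_product] at hq ⊢
    obtain ⟨⟨hq1, hq2⟩, hc1, hc2⟩ := hq
    refine ⟨⟨?_, ?_⟩, by simpa using hc2, by simpa using hc1⟩
    · rw [mem_swap_iff', Prod.swap_swap]; exact hq2
    · rw [mem_swap_iff', Prod.swap_swap]; exact hq1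
  · intro p _; simp
  · intro q _; simp

lemma crossNum_eq_CN (E : Finset (X × Y)) (fX : X ≃ Fin (Fintype.card X))
    (fY : Y ≃ Fin (Fintype.card Y)) :
    crossNum E fX fY = CN E (fun x => (fX x : ℕ)) (fun y => (fY y : ℕ)) := by
  rfl


end AuxLeaves

/-- Every bipartite graph has an optimal two-layer drawing in which, for every non-leaf
vertex `v`, the leaves adjacent to `v` occupy consecutive positions in their layer. -/
theorem exists_optimal_drawing_leaves_consecutive (X Y : Type) [Fintype X] [Fintype Y]
    [DecidableEq X] [DecidableEq Y] (E : Finset (X × Y)) :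
    ∃ (fX : X ≃ Fin (Fintype.card X)) (fY : Y ≃ Fin (Fintype.card Y)),
      crossNum E fX fY = bcr E ∧
      (∀ x : X, ¬ IsLeaf E (Sum.inl x) →
        IsConsecutive {n : ℕ | ∃ y : Y,
          (x, y) ∈ E ∧ IsLeaf E (Sum.inr y) ∧ (fY y : ℕ) = n}) ∧
      (∀ y : Y, ¬ IsLeaf E (Sum.inr y) →
        IsConsecutive {n : ℕ | ∃ x : X,
          (x, y) ∈ E ∧ IsLeaf E (Sum.inl x) ∧ (fX x : ℕ) = n}) := by
  classical
  have hne : {k | ∃ fX fY, crossNum E fX fY = k}.Nonempty :=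
    ⟨crossNum E (Fintype.equivFin X) (Fintype.equivFin Y),
      Fintype.equivFin X, Fintype.equivFin Y, rfl⟩
  obtain ⟨fX0, fY0, hopt⟩ := Nat.sInf_mem hne
  have hinjY0 : Function.Injective (fun y => (fY0 y : ℕ)) :=
    fun a b h => fY0.injective (Fin.val_injective h)
  have hinjX0 : Function.Injective (fun x => (fX0 x : ℕ)) :=
    fun a b h => fX0.injective (Fin.val_injective h)
  obtain ⟨fY1, hY1, hYcons⟩ := core_thm E (fun x => (fX0 x : ℕ)) (fun y => (fY0 y : ℕ)) hinjY0
  obtain ⟨fX1, hX1, hXcons⟩ :=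
    core_thm (E.image Prod.swap) (fun y => (fY1 y : ℕ)) (fun x => (fX0 x : ℕ)) hinjX0
  refine ⟨fX1, fY1, ?_, ?_, ?_⟩
  · have h1 : crossNum E fX1 fY1
        = CN (E.image Prod.swap) (fun y => (fY1 y : ℕ)) (fun x => (fX1 x : ℕ)) := by
      rw [crossNum_eq_CN, CN_swap]
    have h2 : CN (E.image Prod.swap) (fun y => (fY1 y : ℕ)) (fun x => (fX0 x : ℕ))
        = CN E (fun x => (fX0 x : ℕ)) (fun y => (fY1 y : ℕ)) := CN_swap _ _ _
    have hle : crossNum E fX1 fY1 ≤ bcr E := by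
      rw [h1]
      calc CN (E.image Prod.swap) (fun y => (fY1 y : ℕ)) (fun x => (fX1 x : ℕ))
          ≤ CN (E.image Prod.swap) (fun y => (fY1 y : ℕ)) (fun x => (fX0 x : ℕ)) := hX1
        _ = CN E (fun x => (fX0 x : ℕ)) (fun y => (fY1 y : ℕ)) := h2
        _ ≤ CN E (fun x => (fX0 x : ℕ)) (fun y => (fY0 y : ℕ)) := hY1
        _ = crossNum E fX0 fY0 := (crossNum_eq_CN E fX0 fY0).symm
        _ = bcr E := hopt
    have hge : bcr E ≤ crossNum E fX1 fY1 := Nat.sInf_le ⟨fX1, fY1, rfl⟩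
    omega
  · intro x _
    have hset : {n : ℕ | ∃ y : Y, (x, y) ∈ E ∧ IsLeaf E (Sum.inr y) ∧ (fY1 y : ℕ) = n}
        = {n : ℕ | ∃ w, (x, w) ∈ E ∧ Wleaf E w ∧ (fY1 w : ℕ) = n} := by
      ext n
      simp only [Set.mem_setOf_eq, isleaf_inr_iff]
    rw [hset]
    exact hYcons x
  · intro y _
    have hset : {n : ℕ | ∃ x : X, (x, y) ∈ E ∧ IsLeaf E (Sum.inl x) ∧ (fX1 x : ℕ) = n}
        = {n : ℕ | ∃ w, (y, w) ∈ E.image Prod.swap ∧ Wleaf (E.image Prod.swap) w ∧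
            (fX1 w : ℕ) = n} := by
      ext n
      simp only [Set.mem_setOf_eq, isleaf_inl_iff, mem_swap_iff', Prod.swap]
    rw [hset]
    exact hXcons y
end

section
/- Let G be a bipartite graph with bipartition (X, Y) whose connected components are G_1, …, G_m (each G_i inheriting the bipartition (X ∩ V(G_i), Y ∩ V(G_i))). Then the bipartite crossing number of G equals the sum of the bipartite crossing numbers of its components: bcr(G) = Σ_{i=1}^{m} bcr(G_i). -/
open Finset

variable {X Y : Type} [Fintype X] [Fintype Y] [DecidableEq X] [DecidableEq Y]

open scoped Classical in
/-- The part of `X` lying in the connected component `c`. -/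
noncomputable def compX (E : Finset (X × Y)) (c : (biGraph E).ConnectedComponent) :=
  {x : X // (biGraph E).connectedComponentMk (Sum.inl x) = c}

open scoped Classical in
/-- The part of `Y` lying in the connected component `c`. -/
noncomputable def compY (E : Finset (X × Y)) (c : (biGraph E).ConnectedComponent) :=
  {y : Y // (biGraph E).connectedComponentMk (Sum.inr y) = c}

open scoped Classical in
noncomputable instance (E : Finset (X × Y)) (c : (biGraph E).ConnectedComponent) :
    Fintype (compX E c) := by unfold compX; infer_instance

open scoped Classical in
noncomputable instance (E : Finset (X × Y)) (c : (biGraph E).ConnectedComponent) :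
    Fintype (compY E c) := by unfold compY; infer_instance

instance (E : Finset (X × Y)) (c : (biGraph E).ConnectedComponent) :
    DecidableEq (compX E c) := fun a b =>
  decidable_of_iff (a.1 = b.1) Subtype.coe_inj

instance (E : Finset (X × Y)) (c : (biGraph E).ConnectedComponent) :
    DecidableEq (compY E c) := fun a b =>
  decidable_of_iff (a.1 = b.1) Subtype.coe_inj

/-- The edge set of the connected component `c`, with endpoints in `compX E c` and
`compY E c`. -/
noncomputable def compE (E : Finset (X × Y)) (c : (biGraph E).ConnectedComponent) :
    Finset (compX E c × compY E c) :=
  Finset.univ.filter fun p => (p.1.1, p.2.1) ∈ E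


section AuxProofs
open scoped Classical

private lemma nat_digit_le' {N a a' r r' : ℕ} (hr' : r' < N) (h : a * N + r < a' * N + r') :
    a ≤ a' := by
  by_contra hc
  push_neg at hc
  have : a' * N + r' < a * N + r := by
    calc a' * N + r' < a' * N + N := by omega
    _ = (a' + 1) * N := by ring
    _ ≤ a * N := Nat.mul_le_mul_right _ hc
    _ ≤ a * N + r := Nat.le_add_right _ _
  omega

private lemma nat_digit_eq' {N a a' r r' : ℕ} (hr : r < N) (hr' : r' < N)
    (h : a * N + r = a' * N + r') : a = a' ∧ r = r' := by
  have hN : 0 < N := lt_of_le_of_lt (Nat.zero_le _) hr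
  have e1 : (a * N + r) / N = a := by
    rw [Nat.mul_comm, Nat.mul_add_div hN, Nat.div_eq_of_lt hr, Nat.add_zero]
  have e2 : (a' * N + r') / N = a' := by
    rw [Nat.mul_comm, Nat.mul_add_div hN, Nat.div_eq_of_lt hr', Nat.add_zero]
  have ha : a = a' := by rw [← e1, ← e2, h]
  subst ha
  exact ⟨rfl, by omega⟩

private lemma exists_mono_equiv {α β : Type*} [Fintype α] [LinearOrder β] (f : α → β)
    (hf : Function.Injective f) :
    ∃ g : α ≃ Fin (Fintype.card α), ∀ a b, g a < g b ↔ f a < f b := by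
  letI : LinearOrder α := LinearOrder.lift' f hf
  exact ⟨(monoEquivOfFin α rfl).symm.toEquiv, fun a b => (monoEquivOfFin α rfl).symm.lt_iff_lt⟩

private lemma mem_compE {E : Finset (X × Y)} {c : (biGraph E).ConnectedComponent}
    {p : compX E c × compY E c} : p ∈ compE E c ↔ (p.1.1, p.2.1) ∈ E := by
  simp [compE]

private lemma comp_edge {E : Finset (X × Y)} {x : X} {y : Y} (h : (x, y) ∈ E) :
    (biGraph E).connectedComponentMk (Sum.inr y) =
      (biGraph E).connectedComponentMk (Sum.inl x) :=
  SimpleGraph.ConnectedComponent.sound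
    (SimpleGraph.Adj.reachable (show (biGraph E).Adj (Sum.inr y) (Sum.inl x) from h))

private lemma core_card (E : Finset (X × Y)) (fX : X ≃ Fin (Fintype.card X))
    (fY : Y ≃ Fin (Fintype.card Y)) (c : (biGraph E).ConnectedComponent)
    (gX : compX E c ≃ Fin (Fintype.card (compX E c)))
    (gY : compY E c ≃ Fin (Fintype.card (compY E c)))
    (hgX : ∀ a b, gX a < gX b ↔ fX a.1 < fX b.1)
    (hgY : ∀ a b, gY a < gY b ↔ fY a.1 < fY b.1) :
    ((E ×ˢ E).filter fun p =>
        (fX p.1.1 < fX p.2.1 ∧ fY p.2.2 < fY p.1.2) ∧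
        (biGraph E).connectedComponentMk (Sum.inl p.1.1) = c ∧
        (biGraph E).connectedComponentMk (Sum.inl p.2.1) = c).card
      = crossNum (compE E c) gX gY := by
  unfold crossNum
  refine (Finset.card_bij (fun q _ => ((q.1.1.1, q.1.2.1), (q.2.1.1, q.2.2.1))) ?_ ?_ ?_).symm
  · rintro ⟨⟨a1, b1⟩, ⟨a2, b2⟩⟩ hq
    simp only [Finset.mem_filter, Finset.mem_product, mem_compE] at hq ⊢
    obtain ⟨⟨h1, h2⟩, hlt1, hlt2⟩ := hq
    exact ⟨⟨h1, h2⟩, ⟨(hgX _ _).mp hlt1, (hgY _ _).mp hlt2⟩, a1.2, a2.2⟩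
  · rintro ⟨⟨a1, b1⟩, ⟨a2, b2⟩⟩ _ ⟨⟨a1', b1'⟩, ⟨a2', b2'⟩⟩ _ h
    simp only [Prod.mk.injEq] at h
    simp only [Prod.mk.injEq]
    exact ⟨⟨Subtype.ext h.1.1, Subtype.ext h.1.2⟩, Subtype.ext h.2.1, Subtype.ext h.2.2⟩
  · rintro ⟨⟨x1, y1⟩, ⟨x2, y2⟩⟩ hp
    simp only [Finset.mem_filter, Finset.mem_product] at hp
    obtain ⟨⟨he1, he2⟩, ⟨hlt1, hlt2⟩, hc1, hc2⟩ := hp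
    have hy1 : (biGraph E).connectedComponentMk (Sum.inr y1) = c := (comp_edge he1).trans hc1
    have hy2 : (biGraph E).connectedComponentMk (Sum.inr y2) = c := (comp_edge he2).trans hc2
    refine ⟨((⟨x1, hc1⟩, ⟨y1, hy1⟩), (⟨x2, hc2⟩, ⟨y2, hy2⟩)), ?_, rfl⟩
    simp only [Finset.mem_filter, Finset.mem_product, mem_compE]
    exact ⟨⟨he1, he2⟩, (hgX _ _).mpr hlt1, (hgY _ _).mpr hlt2⟩

private lemma sum_bcr_le_crossNum (E : Finset (X × Y))
    [Fintype (biGraph E).ConnectedComponent]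
    (fX : X ≃ Fin (Fintype.card X)) (fY : Y ≃ Fin (Fintype.card Y)) :
    ∑ c : (biGraph E).ConnectedComponent, bcr (compE E c) ≤ crossNum E fX fY := by
  classical
  have key : ∀ c : (biGraph E).ConnectedComponent, bcr (compE E c) ≤
      (((E ×ˢ E).filter fun p => fX p.1.1 < fX p.2.1 ∧ fY p.2.2 < fY p.1.2).filter
        fun p => (biGraph E).connectedComponentMk (Sum.inl p.1.1) = c ∧
          (biGraph E).connectedComponentMk (Sum.inl p.2.1) = c).card := by
    intro c
    obtain ⟨gX, hgX⟩ := exists_mono_equiv (fun a : compX E c => fX a.1)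
      (fun a b h => Subtype.ext (fX.injective h))
    obtain ⟨gY, hgY⟩ := exists_mono_equiv (fun a : compY E c => fY a.1)
      (fun a b h => Subtype.ext (fY.injective h))
    rw [Finset.filter_filter]
    rw [core_card E fX fY c gX gY hgX hgY]
    exact Nat.sInf_le ⟨gX, gY, rfl⟩
  calc ∑ c : (biGraph E).ConnectedComponent, bcr (compE E c)
      ≤ ∑ c : (biGraph E).ConnectedComponent,
        (((E ×ˢ E).filter fun p => fX p.1.1 < fX p.2.1 ∧ fY p.2.2 < fY p.1.2).filter
          fun p => (biGraph E).connectedComponentMk (Sum.inl p.1.1) = c ∧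
            (biGraph E).connectedComponentMk (Sum.inl p.2.1) = c).card :=
      Finset.sum_le_sum fun c _ => key c
    _ ≤ ∑ c : (biGraph E).ConnectedComponent,
        (((E ×ˢ E).filter fun p => fX p.1.1 < fX p.2.1 ∧ fY p.2.2 < fY p.1.2).filter
          fun p => (biGraph E).connectedComponentMk (Sum.inl p.1.1) = c).card := by
      refine Finset.sum_le_sum fun c _ => Finset.card_le_card ?_
      intro p hp
      simp only [Finset.mem_filter] at hp ⊢
      exact ⟨hp.1, hp.2.1⟩
    _ = crossNum E fX fY := by
      rw [crossNum]
      exact (Finset.card_eq_sum_card_fiberwise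
        (f := fun p : (X × Y) × (X × Y) => (biGraph E).connectedComponentMk (Sum.inl p.1.1))
        (t := Finset.univ) (fun p _ => Finset.mem_univ _)).symm

private lemma sum_bcr_le_bcr (E : Finset (X × Y)) [Fintype (biGraph E).ConnectedComponent] :
    ∑ c : (biGraph E).ConnectedComponent, bcr (compE E c) ≤ bcr E := by
  have hne : {k | ∃ fX fY, crossNum E fX fY = k}.Nonempty :=
    ⟨_, Fintype.equivFin X, Fintype.equivFin Y, rfl⟩
  obtain ⟨fX, fY, h⟩ := Nat.sInf_mem hne
  have hb : bcr E = crossNum E fX fY := h.symm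
  rw [hb]
  exact sum_bcr_le_crossNum E fX fY

private lemma bcr_le_sum (E : Finset (X × Y)) [Fintype (biGraph E).ConnectedComponent] :
    bcr E ≤ ∑ c : (biGraph E).ConnectedComponent, bcr (compE E c) := by
  classical
  have hopt : ∀ c : (biGraph E).ConnectedComponent,
      ∃ gX gY, crossNum (compE E c) gX gY = bcr (compE E c) := by
    intro c
    have hne : {k | ∃ gX gY, crossNum (compE E c) gX gY = k}.Nonempty :=
      ⟨_, Fintype.equivFin _, Fintype.equivFin _, rfl⟩
    exact Nat.sInf_mem hne
  choose gX gY hg using hopt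
  set eC := Fintype.equivFin (biGraph E).ConnectedComponent with heCdef
  set N := Fintype.card X + Fintype.card Y + 1 with hNdef
  have hNX : ∀ c (a : compX E c), (gX c a : ℕ) < N := by
    intro c a
    have h1 : (gX c a : ℕ) < Fintype.card (compX E c) := (gX c a).is_lt
    have h2 : Fintype.card (compX E c) ≤ Fintype.card X :=
      Fintype.card_le_of_injective (fun a => a.1) (fun a b h => Subtype.ext h)
    omega
  have hNY : ∀ c (b : compY E c), (gY c b : ℕ) < N := by
    intro c b
    have h1 : (gY c b : ℕ) < Fintype.card (compY E c) := (gY c b).is_lt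
    have h2 : Fintype.card (compY E c) ≤ Fintype.card Y :=
      Fintype.card_le_of_injective (fun a => a.1) (fun a b h => Subtype.ext h)
    omega
  set kX : X → ℕ := fun x =>
    (eC ((biGraph E).connectedComponentMk (Sum.inl x)) : ℕ) * N +
      (gX ((biGraph E).connectedComponentMk (Sum.inl x)) ⟨x, rfl⟩ : ℕ) with hkXdef
  set kY : Y → ℕ := fun y =>
    (eC ((biGraph E).connectedComponentMk (Sum.inr y)) : ℕ) * N +
      (gY ((biGraph E).connectedComponentMk (Sum.inr y)) ⟨y, rfl⟩ : ℕ) with hkYdef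
  have hkX : ∀ (c) (x : X) (h : (biGraph E).connectedComponentMk (Sum.inl x) = c),
      kX x = (eC c : ℕ) * N + (gX c ⟨x, h⟩ : ℕ) := by
    rintro c x rfl
    rw [hkXdef]
  have hkY : ∀ (c) (y : Y) (h : (biGraph E).connectedComponentMk (Sum.inr y) = c),
      kY y = (eC c : ℕ) * N + (gY c ⟨y, h⟩ : ℕ) := by
    rintro c y rfl
    rw [hkYdef]
  have hXinj : Function.Injective kX := by
    intro x x' h
    have h1 := hkX _ x rfl
    have h2 := hkX _ x' rfl
    rw [h1, h2] at h
    obtain ⟨ha, hr⟩ := nat_digit_eq' (hNX _ _) (hNX _ _) h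
    have hcc : (biGraph E).connectedComponentMk (Sum.inl x) =
        (biGraph E).connectedComponentMk (Sum.inl x') := eC.injective (Fin.val_injective ha)
    have h3 := hkX _ x' hcc.symm
    have h4 : (gX _ (⟨x, rfl⟩ : compX E ((biGraph E).connectedComponentMk (Sum.inl x))) : ℕ)
        = (gX _ (⟨x', hcc.symm⟩ : compX E ((biGraph E).connectedComponentMk (Sum.inl x))) : ℕ) := by
      have h5 := h2.symm.trans h3
      rw [← ha] at h5
      omega
    exact congrArg Subtype.val ((gX _).injective (Fin.val_injective h4))
  have hYinj : Function.Injective kY := by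
    intro y y' h
    have h1 := hkY _ y rfl
    have h2 := hkY _ y' rfl
    rw [h1, h2] at h
    obtain ⟨ha, hr⟩ := nat_digit_eq' (hNY _ _) (hNY _ _) h
    have hcc : (biGraph E).connectedComponentMk (Sum.inr y) =
        (biGraph E).connectedComponentMk (Sum.inr y') := eC.injective (Fin.val_injective ha)
    have h3 := hkY _ y' hcc.symm
    have h4 : (gY _ (⟨y, rfl⟩ : compY E ((biGraph E).connectedComponentMk (Sum.inr y))) : ℕ)
        = (gY _ (⟨y', hcc.symm⟩ : compY E ((biGraph E).connectedComponentMk (Sum.inr y))) : ℕ) := by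
      have h5 := h2.symm.trans h3
      rw [← ha] at h5
      omega
    exact congrArg Subtype.val ((gY _).injective (Fin.val_injective h4))
  obtain ⟨fX, hfX⟩ := exists_mono_equiv kX hXinj
  obtain ⟨fY, hfY⟩ := exists_mono_equiv kY hYinj
  refine le_trans (Nat.sInf_le ⟨fX, fY, rfl⟩) ?_
  rw [crossNum]
  rw [Finset.card_eq_sum_card_fiberwise
    (f := fun p : (X × Y) × (X × Y) => (biGraph E).connectedComponentMk (Sum.inl p.1.1))
    (t := Finset.univ) (fun p _ => Finset.mem_univ _)]
  refine Finset.sum_le_sum fun c _ => ?_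
  have hgXc : ∀ a b : compX E c, gX c a < gX c b ↔ fX a.1 < fX b.1 := by
    intro a b
    rw [hfX, hkX c a.1 a.2, hkX c b.1 b.2, Nat.add_lt_add_iff_left]
    exact Iff.rfl
  have hgYc : ∀ a b : compY E c, gY c a < gY c b ↔ fY a.1 < fY b.1 := by
    intro a b
    rw [hfY, hkY c a.1 a.2, hkY c b.1 b.2, Nat.add_lt_add_iff_left]
    exact Iff.rfl
  have hfiber : ((E ×ˢ E).filter fun p => fX p.1.1 < fX p.2.1 ∧ fY p.2.2 < fY p.1.2).filter
        (fun p => (biGraph E).connectedComponentMk (Sum.inl p.1.1) = c)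
      = ((E ×ˢ E).filter fun p => fX p.1.1 < fX p.2.1 ∧ fY p.2.2 < fY p.1.2).filter
        (fun p => (biGraph E).connectedComponentMk (Sum.inl p.1.1) = c ∧
          (biGraph E).connectedComponentMk (Sum.inl p.2.1) = c) := by
    refine Finset.filter_congr ?_
    rintro ⟨⟨x1, y1⟩, ⟨x2, y2⟩⟩ hp
    simp only [Finset.mem_filter, Finset.mem_product] at hp
    obtain ⟨⟨he1, he2⟩, hlt1, hlt2⟩ := hp
    constructor
    · intro hc1
      refine ⟨hc1, ?_⟩
      have hk1 : kX x1 < kX x2 := (hfX _ _).mp hlt1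
      have hk2 : kY y2 < kY y1 := (hfY _ _).mp hlt2
      rw [hkX _ x1 rfl, hkX _ x2 rfl] at hk1
      rw [hkY ((biGraph E).connectedComponentMk (Sum.inl x2)) y2 (comp_edge he2),
        hkY ((biGraph E).connectedComponentMk (Sum.inl x1)) y1 (comp_edge he1)] at hk2
      have hle1 : (eC ((biGraph E).connectedComponentMk (Sum.inl x1)) : ℕ)
          ≤ (eC ((biGraph E).connectedComponentMk (Sum.inl x2)) : ℕ) :=
        nat_digit_le' (hNX _ _) hk1
      have hle2 : (eC ((biGraph E).connectedComponentMk (Sum.inl x2)) : ℕ)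
          ≤ (eC ((biGraph E).connectedComponentMk (Sum.inl x1)) : ℕ) :=
        nat_digit_le' (hNY _ _) hk2
      have : (biGraph E).connectedComponentMk (Sum.inl x2)
          = (biGraph E).connectedComponentMk (Sum.inl x1) :=
        eC.injective (Fin.val_injective (le_antisymm hle2 hle1))
      rw [this, hc1]
    · exact fun h => h.1
  rw [hfiber, Finset.filter_filter,
    core_card E fX fY c (gX c) (gY c) hgXc hgYc]
  exact le_of_eq (hg c)

end AuxProofs


/-- The bipartite crossing number of a bipartite graph is the sum of the bipartite
crossing numbers of its connected components. -/
theorem bcr_eq_sum_components (X Y : Type) [Fintype X] [Fintype Y]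
    [DecidableEq X] [DecidableEq Y] (E : Finset (X × Y)) :
    bcr E = ∑ᶠ c : (biGraph E).ConnectedComponent, bcr (compE E c) := by
  classical
  haveI : Fintype (biGraph E).ConnectedComponent := Fintype.ofFinite _
  rw [finsum_eq_sum_of_fintype]
  exact le_antisymm (bcr_le_sum E) (sum_bcr_le_bcr E)
end
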